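/- arXiv:2208.13297 — 8 statements merged into one kernel-verified Lean document; each statement's English description precedes it below -/
import Mathlib

section
/- Every finite simple graph G admits a proper edge-coloring with at most Δ(G)^2 colors such that every color class is a semistrong matching and, moreover, for every edge e there is at most one edge at distance exactly 2 from e receiving the same color as e (i.e., the coloring is also a (0,1)-relaxed strong edge-coloring). -/
open SimpleGraph Finset

variable {V : Type*}

/-- The set of endvertices of the edges in `M`. -/
def edgeVerts (M : Set (Sym2 V)) : Set V := {v | ∃ e ∈ M, v ∈ e}

/-- `M` is a matching of the simple graph `G`: a set of edges of `G`
that are pairwise disjoint. -/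
def IsMatchingSet (G : SimpleGraph V) (M : Set (Sym2 V)) : Prop :=
  M ⊆ G.edgeSet ∧ ∀ e ∈ M, ∀ f ∈ M, e ≠ f → ∀ v : V, v ∈ e → v ∉ f

/-- `M` is a semistrong matching of `G`: a matching such that every edge of `M`
has an endvertex of degree one in the subgraph of `G` induced by the
endvertices of the edges of `M`. -/
def IsSemistrongMatching (G : SimpleGraph V) (M : Set (Sym2 V)) : Prop :=
  IsMatchingSet G M ∧
    ∀ e ∈ M, ∃ u v : V, e = s(u, v) ∧ ∀ w ∈ edgeVerts M, G.Adj u w → w = v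

/-- `G` has a semistrong edge-coloring with (at most) `k` colors: a proper
edge-coloring in which every color class is a semistrong matching. -/
def HasSemistrongEdgeColoring (G : SimpleGraph V) (k : ℕ) : Prop :=
  ∃ c : Sym2 V → ℕ, (∀ e ∈ G.edgeSet, c e < k) ∧
    ∀ i : ℕ, IsSemistrongMatching G {e | e ∈ G.edgeSet ∧ c e = i}

/-- The semistrong chromatic index of `G`. -/
noncomputable def ssChromIdx (G : SimpleGraph V) : ℕ :=
  sInf {k | HasSemistrongEdgeColoring G k}

/-- The edges `e` and `f` of `G` are at distance exactly `2`: they are disjoint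
and some edge of `G` is adjacent to both. -/
def AtDistTwo (G : SimpleGraph V) (e f : Sym2 V) : Prop :=
  e ∈ G.edgeSet ∧ f ∈ G.edgeSet ∧ (∀ v : V, v ∈ e → v ∉ f) ∧
    ∃ g ∈ G.edgeSet, (∃ v : V, v ∈ g ∧ v ∈ e) ∧ (∃ w : V, w ∈ g ∧ w ∈ f)

set_option linter.unusedSectionVars false

namespace SStrong
variable {V : Type*} [Fintype V] [DecidableEq V]

/-- two edges share a vertex -/
def touch (e f : Sym2 V) : Prop := ∃ v, v ∈ e ∧ v ∈ f

instance (e f : Sym2 V) : Decidable (touch e f) := by unfold touch; infer_instance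

lemma touch_comm {e f : Sym2 V} : touch e f ↔ touch f e := by unfold touch; tauto

lemma touch_self (e : Sym2 V) : touch e e := by
  induction e using Sym2.ind with
  | _ u v => exact ⟨u, Sym2.mem_mk_left u v, Sym2.mem_mk_left u v⟩

variable (G : SimpleGraph V) [DecidableRel G.Adj]

/-- number of edges of `G` connecting `e` and `f` -/
def tc (e f : Sym2 V) : ℕ := (G.edgeFinset.filter (fun g => touch g e ∧ touch g f)).card

lemma tc_comm (e f : Sym2 V) : tc G e f = tc G f e := by
  unfold tc; congr 1; apply Finset.filter_congr; intro g _; exact and_comm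

/-- proper edge coloring on edge set -/
def Pr {k : ℕ} (c : Sym2 V → Fin k) : Prop :=
  ∀ e ∈ G.edgeFinset, ∀ f ∈ G.edgeFinset, e ≠ f → touch e f → c e ≠ c f

/-- weighted distance-2 conflict of an edge -/
def W {k : ℕ} (c : Sym2 V → Fin k) (e : Sym2 V) : ℕ :=
  ∑ f ∈ G.edgeFinset.filter (fun f => ¬ touch e f ∧ c f = c e), tc G e f

end SStrong

namespace SStrong
variable {V : Type*} [Fintype V] [DecidableEq V]
variable (G : SimpleGraph V) [DecidableRel G.Adj]

lemma maxDegree_pos_of_mem {e : Sym2 V} (he : e ∈ G.edgeFinset) : 1 ≤ G.maxDegree := by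
  induction e using Sym2.ind with
  | _ u v =>
    have h : G.Adj u v := by rwa [mem_edgeFinset, mem_edgeSet] at he
    have h2 : 0 < G.degree u := by
      rw [G.degree_pos_iff_exists_adj]; exact ⟨v, h⟩
    exact h2.trans_le (G.degree_le_maxDegree u)

lemma adj_card {e : Sym2 V} (he : e ∈ G.edgeFinset) :
    (G.edgeFinset.filter (fun g => g ≠ e ∧ touch g e)).card + 2 ≤ 2 * G.maxDegree := by
  induction e using Sym2.ind with
  | _ u v =>
    have hadj : G.Adj u v := by rwa [mem_edgeFinset, mem_edgeSet] at he
    set A := G.incidenceFinset u with hA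
    set B := G.incidenceFinset v with hB
    have hsub : G.edgeFinset.filter (fun g => g ≠ s(u,v) ∧ touch g s(u,v))
        ⊆ (A ∪ B).erase s(u,v) := by
      intro g hg
      simp only [mem_filter] at hg
      obtain ⟨hgE, hne, w, hwg, hwe⟩ := hg
      rw [Finset.mem_erase, Finset.mem_union]
      refine ⟨hne, ?_⟩
      rw [Sym2.mem_iff] at hwe
      rcases hwe with rfl | rfl
      · exact Or.inl (by rw [hA, mem_incidenceFinset]; exact ⟨mem_edgeFinset.mp hgE, hwg⟩)
      · exact Or.inr (by rw [hB, mem_incidenceFinset]; exact ⟨mem_edgeFinset.mp hgE, hwg⟩)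
    have heA : s(u,v) ∈ A := by
      rw [hA, mem_incidenceFinset]
      exact ⟨mem_edgeFinset.mp he, Sym2.mem_mk_left u v⟩
    have heB : s(u,v) ∈ B := by
      rw [hB, mem_incidenceFinset]
      exact ⟨mem_edgeFinset.mp he, Sym2.mem_mk_right u v⟩
    have h1 : ((A ∪ B).erase s(u,v)).card + 1 = (A ∪ B).card :=
      Finset.card_erase_add_one (Finset.mem_union_left _ heA)
    have h2 : (A ∪ B).card + (A ∩ B).card = A.card + B.card :=
      Finset.card_union_add_card_inter A B
    have h3 : 0 < (A ∩ B).card :=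
      Finset.card_pos.mpr ⟨s(u,v), Finset.mem_inter.mpr ⟨heA, heB⟩⟩
    have hAd : A.card = G.degree u := G.card_incidenceFinset_eq_degree u
    have hBd : B.card = G.degree v := G.card_incidenceFinset_eq_degree v
    have hdu := G.degree_le_maxDegree u
    have hdv := G.degree_le_maxDegree v
    have hcc := Finset.card_le_card hsub
    omega

lemma conn_card {e g : Sym2 V} (hgE : g ∈ G.edgeFinset) (hge : touch g e) :
    ((G.edgeFinset.filter (fun f => ¬ touch e f)).filter (fun f => touch g f)).card + 1
      ≤ G.maxDegree := by
  obtain ⟨x, hxg, hxe⟩ := hge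
  have hspec : s(x, Sym2.Mem.other' hxg) = g := Sym2.other_spec' hxg
  set y := Sym2.Mem.other' hxg with hy
  have hyg : y ∈ g := Sym2.other_mem' hxg
  have hsub : (G.edgeFinset.filter (fun f => ¬ touch e f)).filter (fun f => touch g f)
      ⊆ (G.incidenceFinset y).erase g := by
    intro f hf
    simp only [mem_filter] at hf
    obtain ⟨⟨hfE, hnt⟩, w, hwg, hwf⟩ := hf
    have hne : f ≠ g := by rintro rfl; exact hnt ⟨x, hxe, hxg⟩
    have hwxy : w = x ∨ w = y := by rw [← hspec, Sym2.mem_iff] at hwg; exact hwg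
    rcases hwxy with rfl | rfl
    · exact absurd ⟨w, hxe, hwf⟩ hnt
    · rw [Finset.mem_erase]
      exact ⟨hne, by rw [mem_incidenceFinset]; exact ⟨mem_edgeFinset.mp hfE, hwf⟩⟩
  have hgy : g ∈ G.incidenceFinset y := by
    rw [mem_incidenceFinset]; exact ⟨mem_edgeFinset.mp hgE, hyg⟩
  have h1 := Finset.card_erase_add_one hgy
  have h2 : (G.incidenceFinset y).card = G.degree y := G.card_incidenceFinset_eq_degree y
  have h3 := G.degree_le_maxDegree y
  have h4 := Finset.card_le_card hsub
  omega

lemma Tbound {e : Sym2 V} (he : e ∈ G.edgeFinset) :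
    ∑ f ∈ G.edgeFinset.filter (fun f => ¬ touch e f), tc G e f
      ≤ 2 * (G.maxDegree - 1) * (G.maxDegree - 1) := by
  set D := G.edgeFinset.filter (fun f => ¬ touch e f) with hD
  have step1 : ∑ f ∈ D, tc G e f
      = ∑ g ∈ G.edgeFinset, (D.filter (fun f => touch g e ∧ touch g f)).card := by
    unfold tc
    simp_rw [Finset.card_filter]
    rw [Finset.sum_comm]
  have hbound : ∀ g ∈ G.edgeFinset,
      (D.filter (fun f => touch g e ∧ touch g f)).card
        ≤ if g ≠ e ∧ touch g e then G.maxDegree - 1 else 0 := by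
    intro g hg
    by_cases h1 : touch g e
    · by_cases h2 : g = e
      · have hemp : D.filter (fun f => touch g e ∧ touch g f) = ∅ := by
          rw [Finset.filter_eq_empty_iff]
          intro f hf hc
          rw [hD, mem_filter] at hf
          rw [h2] at hc
          exact hf.2 hc.2
        rw [h2] at hemp
        simp [hemp, h2]
      · have hc := conn_card G hg h1
        have hss : D.filter (fun f => touch g e ∧ touch g f)
            ⊆ (G.edgeFinset.filter (fun f => ¬ touch e f)).filter (fun f => touch g f) := by
          intro f hf
          rw [mem_filter] at hf ⊢
          exact ⟨by rw [← hD]; exact hf.1, hf.2.2⟩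
        have hcc := Finset.card_le_card hss
        rw [if_pos (show (g ≠ e ∧ touch g e) from ⟨h2, h1⟩)]
        omega
    · have hemp : D.filter (fun f => touch g e ∧ touch g f) = ∅ := by
        rw [Finset.filter_eq_empty_iff]; exact fun f _ hc => h1 hc.1
      simp [hemp]
  calc ∑ f ∈ D, tc G e f
      = ∑ g ∈ G.edgeFinset, (D.filter (fun f => touch g e ∧ touch g f)).card := step1
    _ ≤ ∑ g ∈ G.edgeFinset, (if g ≠ e ∧ touch g e then G.maxDegree - 1 else 0) :=
        Finset.sum_le_sum hbound
    _ = (G.edgeFinset.filter (fun g => g ≠ e ∧ touch g e)).card * (G.maxDegree - 1) := by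
        rw [← Finset.sum_filter, Finset.sum_const, smul_eq_mul]
    _ ≤ (2 * (G.maxDegree - 1)) * (G.maxDegree - 1) := by
        have h0 := adj_card G he
        have h1 := maxDegree_pos_of_mem G he
        exact Nat.mul_le_mul_right _ (by omega)
    _ = 2 * (G.maxDegree - 1) * (G.maxDegree - 1) := by ring

end SStrong

namespace SStrong
variable {V : Type*} [Fintype V] [DecidableEq V]
variable (G : SimpleGraph V) [DecidableRel G.Adj]

lemma exists_good_color {k : ℕ} (hk : k = G.maxDegree ^ 2) {e : Sym2 V}
    (he : e ∈ G.edgeFinset) (c : Sym2 V → Fin k) :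
    ∃ α : Fin k, (∀ g ∈ G.edgeFinset, g ≠ e → touch g e → c g ≠ α) ∧
      ∑ f ∈ G.edgeFinset.filter (fun f => ¬ touch e f ∧ c f = α), tc G e f ≤ 1 := by
  have hΔ := maxDegree_pos_of_mem G he
  obtain ⟨d, hd⟩ : ∃ d, G.maxDegree = d + 1 := ⟨G.maxDegree - 1, by omega⟩
  set S : Fin k → ℕ :=
    fun α => ∑ f ∈ G.edgeFinset.filter (fun f => ¬ touch e f ∧ c f = α), tc G e f with hS
  set F1 := (G.edgeFinset.filter (fun g => g ≠ e ∧ touch g e)).image c with hF1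
  set F2 := Finset.univ.filter (fun α : Fin k => 2 ≤ S α) with hF2
  have hF1card : F1.card ≤ 2 * d := by
    have h1 := adj_card G he
    have h2 := Finset.card_image_le (s := G.edgeFinset.filter (fun g => g ≠ e ∧ touch g e)) (f := c)
    rw [hd] at h1
    rw [hF1]
    omega
  have hsumS : ∑ α ∈ Finset.univ, S α
      = ∑ f ∈ G.edgeFinset.filter (fun f => ¬ touch e f), tc G e f := by
    rw [hS]
    have hff : ∀ α : Fin k, G.edgeFinset.filter (fun f => ¬ touch e f ∧ c f = α)
        = (G.edgeFinset.filter (fun f => ¬ touch e f)).filter (fun f => c f = α) := by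
      intro α; rw [Finset.filter_filter]
    simp_rw [hff]
    exact Finset.sum_fiberwise_of_maps_to (fun f _ => Finset.mem_univ _) _
  have hF2card : F2.card ≤ d * d := by
    have h2 : 2 * F2.card ≤ ∑ α ∈ F2, S α := by
      calc 2 * F2.card = ∑ _α ∈ F2, 2 := by rw [Finset.sum_const, smul_eq_mul, mul_comm]
      _ ≤ ∑ α ∈ F2, S α := Finset.sum_le_sum (fun α hα => (Finset.mem_filter.mp hα).2)
    have h3 : ∑ α ∈ F2, S α ≤ ∑ α ∈ Finset.univ, S α :=
      Finset.sum_le_sum_of_subset (Finset.subset_univ _)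
    have h4 := Tbound G he
    rw [hsumS] at h3
    rw [hd] at h4
    simp only [Nat.add_sub_cancel] at h4
    have h5 : 2 * F2.card ≤ 2 * (d * d) := by
      calc 2 * F2.card ≤ ∑ α ∈ F2, S α := h2
        _ ≤ _ := h3
        _ ≤ 2 * d * d := h4
        _ = 2 * (d * d) := by ring
    omega
  have hcard : (F1 ∪ F2).card < k := by
    have h1 := Finset.card_union_le F1 F2
    have hk2 : k = d * d + 2 * d + 1 := by rw [hk, hd]; ring
    omega
  obtain ⟨α, hα⟩ : ∃ α : Fin k, α ∉ F1 ∪ F2 := by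
    by_contra h
    push_neg at h
    have h2 : (Finset.univ : Finset (Fin k)).card ≤ (F1 ∪ F2).card :=
      Finset.card_le_card (fun α _ => h α)
    rw [Finset.card_univ, Fintype.card_fin] at h2
    omega
  rw [Finset.mem_union] at hα
  push_neg at hα
  refine ⟨α, ?_, ?_⟩
  · intro g hg hne ht hc
    exact hα.1 (Finset.mem_image.mpr ⟨g, Finset.mem_filter.mpr ⟨hg, hne, ht⟩, hc⟩)
  · have h2 := hα.2
    rw [hF2, Finset.mem_filter] at h2
    push_neg at h2
    have h3 := h2 (Finset.mem_univ α)
    show S α ≤ 1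
    omega

lemma exists_proper {k : ℕ} (hk : k = G.maxDegree ^ 2) (hΔ : 1 ≤ G.maxDegree) :
    ∃ c : Sym2 V → Fin k, Pr G c := by
  have hk1 : 1 ≤ k := by rw [hk]; exact Nat.one_le_pow _ _ hΔ
  suffices h : ∀ F : Finset (Sym2 V), F ⊆ G.edgeFinset →
      ∃ c : Sym2 V → Fin k, ∀ e ∈ F, ∀ f ∈ F, e ≠ f → touch e f → c e ≠ c f by
    obtain ⟨c, hc⟩ := h G.edgeFinset (subset_refl _)
    exact ⟨c, hc⟩
  intro F
  induction F using Finset.induction_on with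
  | empty => exact fun _ => ⟨fun _ => ⟨0, by omega⟩, by simp⟩
  | @insert a F ha ih =>
    intro hsub
    have haE : a ∈ G.edgeFinset := hsub (Finset.mem_insert_self a F)
    have hFE : F ⊆ G.edgeFinset := fun x hx => hsub (Finset.mem_insert_of_mem hx)
    obtain ⟨c, hc⟩ := ih hFE
    have hΔ2 := maxDegree_pos_of_mem G haE
    obtain ⟨d, hd⟩ : ∃ d, G.maxDegree = d + 1 := ⟨G.maxDegree - 1, by omega⟩
    set F1 := ((F.filter (fun g => g ≠ a ∧ touch g a)).image c) with hF1
    have hF1card : F1.card < k := by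
      have h1 : (F.filter (fun g => g ≠ a ∧ touch g a)).card
          ≤ (G.edgeFinset.filter (fun g => g ≠ a ∧ touch g a)).card :=
        Finset.card_le_card (Finset.filter_subset_filter _ hFE)
      have h2 := adj_card G haE
      have h3 := Finset.card_image_le
        (s := F.filter (fun g => g ≠ a ∧ touch g a)) (f := c)
      have hk2 : k = d * d + 2 * d + 1 := by rw [hk, hd]; ring
      rw [hd] at h2
      rw [hF1]
      omega
    obtain ⟨α, hα⟩ : ∃ α : Fin k, α ∉ F1 := by
      by_contra h
      push_neg at h
      have h2 : (Finset.univ : Finset (Fin k)).card ≤ F1.card :=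
        Finset.card_le_card (fun β _ => h β)
      rw [Finset.card_univ, Fintype.card_fin] at h2
      omega
    refine ⟨Function.update c a α, ?_⟩
    intro e he f hf hne ht
    rcases Finset.mem_insert.mp he with rfl | heF
    · rcases Finset.mem_insert.mp hf with rfl | hfF
      · exact absurd rfl hne
      · have hfa : f ≠ e := fun h => hne h.symm
        rw [Function.update_self, Function.update_of_ne (fun h => ha (by rw [← h]; exact hfF))]
        intro h
        exact hα (Finset.mem_image.mpr ⟨f, Finset.mem_filter.mpr
          ⟨hfF, hfa, touch_comm.mp ht⟩, h.symm⟩)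
    · rcases Finset.mem_insert.mp hf with rfl | hfF
      · rw [Function.update_self, Function.update_of_ne (fun h => ha (by rw [← h]; exact heF))]
        intro h
        exact hα (Finset.mem_image.mpr ⟨e, Finset.mem_filter.mpr
          ⟨heF, hne, ht⟩, h⟩)
      · rw [Function.update_of_ne (fun h => ha (by rw [← h]; exact heF)),
            Function.update_of_ne (fun h => ha (by rw [← h]; exact hfF))]
        exact hc e heF f hfF hne ht

end SStrong

namespace SStrong
variable {V : Type*} [Fintype V] [DecidableEq V]
variable (G : SimpleGraph V) [DecidableRel G.Adj]

def Fent {k : ℕ} (c : Sym2 V → Fin k) (a f : Sym2 V) : ℕ :=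
  if ¬ touch a f ∧ c f = c a then (tc G a f) ^ 2 else 0

def Phi {k : ℕ} (c : Sym2 V → Fin k) : ℕ :=
  ∑ a ∈ G.edgeFinset, ∑ f ∈ G.edgeFinset, Fent G c a f

lemma Fent_comm {k : ℕ} (c : Sym2 V → Fin k) (a f : Sym2 V) :
    Fent G c a f = Fent G c f a := by
  unfold Fent
  have h : (¬ touch a f ∧ c f = c a) ↔ (¬ touch f a ∧ c a = c f) := by
    constructor
    · rintro ⟨h1, h2⟩; exact ⟨fun h' => h1 (touch_comm.mp h'), h2.symm⟩
    · rintro ⟨h1, h2⟩; exact ⟨fun h' => h1 (touch_comm.mp h'), h2.symm⟩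
  rw [if_congr h (by rw [tc_comm]) rfl]

lemma Fent_self {k : ℕ} (c : Sym2 V → Fin k) (a : Sym2 V) : Fent G c a a = 0 := by
  unfold Fent
  rw [if_neg]
  rintro ⟨h1, _⟩
  exact h1 (touch_self a)

lemma Phi_decomp {k : ℕ} (c : Sym2 V → Fin k) {e : Sym2 V} (he : e ∈ G.edgeFinset) :
    Phi G c = 2 * (∑ f ∈ G.edgeFinset, Fent G c e f)
      + ∑ a ∈ G.edgeFinset.erase e, ∑ f ∈ G.edgeFinset.erase e, Fent G c a f := by
  unfold Phi
  rw [← Finset.add_sum_erase _ _ he]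
  have hinner : ∀ a : Sym2 V, ∑ f ∈ G.edgeFinset, Fent G c a f
      = Fent G c a e + ∑ f ∈ G.edgeFinset.erase e, Fent G c a f := by
    intro a; rw [Finset.add_sum_erase _ _ he]
  have h2 : ∑ a ∈ G.edgeFinset.erase e, ∑ f ∈ G.edgeFinset, Fent G c a f
      = (∑ a ∈ G.edgeFinset.erase e, Fent G c a e)
        + ∑ a ∈ G.edgeFinset.erase e, ∑ f ∈ G.edgeFinset.erase e, Fent G c a f := by
    rw [← Finset.sum_add_distrib]
    exact Finset.sum_congr rfl (fun a _ => hinner a)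
  have h3 : ∑ a ∈ G.edgeFinset.erase e, Fent G c a e
      = ∑ f ∈ G.edgeFinset, Fent G c e f := by
    rw [← Finset.add_sum_erase _ (fun f => Fent G c e f) he, Fent_self, zero_add]
    exact Finset.sum_congr rfl (fun a _ => Fent_comm G c a e)
  rw [h2, h3]
  ring

lemma exists_min_coloring (hΔ : 1 ≤ G.maxDegree) :
    ∃ c : Sym2 V → Fin (G.maxDegree ^ 2), Pr G c ∧ ∀ e ∈ G.edgeFinset, W G c e ≤ 1 := by
  set k := G.maxDegree ^ 2 with hk
  set Scols : Set ℕ := {n | ∃ c : Sym2 V → Fin k, Pr G c ∧ Phi G c = n} with hScols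
  have hne : Scols.Nonempty := by
    obtain ⟨c, hc⟩ := exists_proper G hk hΔ
    exact ⟨Phi G c, c, hc, rfl⟩
  obtain ⟨c, hPr, hΦ⟩ := Nat.sInf_mem hne
  refine ⟨c, hPr, ?_⟩
  intro e he
  by_contra hW
  push_neg at hW
  obtain ⟨α, hα1, hα2⟩ := exists_good_color G hk he c
  set c' := Function.update c e α with hc'
  have hce : c' e = α := Function.update_self e α c
  have hcne : ∀ f : Sym2 V, f ≠ e → c' f = c f := fun f hf => Function.update_of_ne hf α c
  -- properness of c'
  have hPr' : Pr G c' := by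
    intro a ha b hb hne' ht
    by_cases hae : a = e
    · have hbe : b ≠ e := fun h => hne' (hae.trans h.symm)
      rw [hae, hce, hcne b hbe]
      intro h
      exact hα1 b hb hbe (by rw [← hae]; exact touch_comm.mp ht) h.symm
    · by_cases hbe : b = e
      · rw [hbe, hce, hcne a hae]
        exact hα1 a ha hae (by rw [← hbe]; exact ht)
      · rw [hcne a hae, hcne b hbe]
        exact hPr a ha b hb hne' ht
  -- the X values
  have hX : W G c e ≤ ∑ f ∈ G.edgeFinset, Fent G c e f := by
    unfold W Fent
    rw [← Finset.sum_filter]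
    exact Finset.sum_le_sum (fun f _ => Nat.le_self_pow two_ne_zero _)
  have hX' : ∑ f ∈ G.edgeFinset, Fent G c' e f ≤ 1 := by
    unfold Fent
    rw [← Finset.sum_filter]
    have hQ : G.edgeFinset.filter (fun f => ¬ touch e f ∧ c' f = c' e)
        = G.edgeFinset.filter (fun f => ¬ touch e f ∧ c f = α) := by
      apply Finset.filter_congr
      intro f _
      constructor
      · rintro ⟨h1, h2⟩
        have hfe : f ≠ e := fun h => h1 (h ▸ touch_self e)
        rw [hcne f hfe, hce] at h2
        exact ⟨h1, h2⟩
      · rintro ⟨h1, h2⟩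
        have hfe : f ≠ e := fun h => h1 (h ▸ touch_self e)
        rw [hcne f hfe, hce]
        exact ⟨h1, h2⟩
    rw [hQ]
    have hpt : ∀ f ∈ G.edgeFinset.filter (fun f => ¬ touch e f ∧ c f = α),
        (tc G e f) ^ 2 = tc G e f := by
      intro f hf
      have h1 : tc G e f ≤ 1 := le_trans (Finset.single_le_sum (fun i _ => Nat.zero_le _) hf) hα2
      have h2 : tc G e f = 0 ∨ tc G e f = 1 := by omega
      rcases h2 with h2 | h2 <;> rw [h2] <;> norm_num
    rw [Finset.sum_congr rfl hpt]
    exact hα2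
  have hD := Phi_decomp G c he
  have hD' := Phi_decomp G c' he
  have hZ : ∑ a ∈ G.edgeFinset.erase e, ∑ f ∈ G.edgeFinset.erase e, Fent G c' a f
      = ∑ a ∈ G.edgeFinset.erase e, ∑ f ∈ G.edgeFinset.erase e, Fent G c a f := by
    apply Finset.sum_congr rfl
    intro a ha
    apply Finset.sum_congr rfl
    intro f hf
    unfold Fent
    rw [hcne a (Finset.mem_erase.mp ha).1, hcne f (Finset.mem_erase.mp hf).1]
  have hmem : Phi G c' ∈ Scols := ⟨c', hPr', rfl⟩
  have hle := Nat.sInf_le hmem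
  omega

end SStrong

/-- Every finite simple graph `G` admits a proper edge-coloring with at most
`Δ(G)^2` colors such that every color class is a semistrong matching and,
moreover, for every edge `e` there is at most one edge at distance exactly `2`
from `e` receiving the same color as `e`. -/
theorem exists_semistrong_relaxed_coloring {V : Type*} [Fintype V] [DecidableEq V]
    (G : SimpleGraph V) [DecidableRel G.Adj] :
    ∃ c : Sym2 V → ℕ,
      (∀ e ∈ G.edgeSet, c e < G.maxDegree ^ 2) ∧
      (∀ i : ℕ, IsSemistrongMatching G {e | e ∈ G.edgeSet ∧ c e = i}) ∧
      (∀ e ∈ G.edgeSet, ∀ f₁ f₂ : Sym2 V,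
        AtDistTwo G e f₁ → c f₁ = c e → AtDistTwo G e f₂ → c f₂ = c e → f₁ = f₂) := by
  classical
  rcases Finset.eq_empty_or_nonempty G.edgeFinset with hE | hE
  · -- no edges at all
    have hES : G.edgeSet = ∅ := by
      rw [← SimpleGraph.coe_edgeFinset, hE]; simp
    refine ⟨fun _ => 0, ?_, ?_, ?_⟩
    · intro e he; rw [hES] at he; exact absurd he (Set.notMem_empty e)
    · intro i
      refine ⟨⟨fun e he => he.1, ?_⟩, ?_⟩
      · intro e he
        exact absurd he.1 (by rw [hES]; exact Set.notMem_empty e)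
      · intro e he
        exact absurd he.1 (by rw [hES]; exact Set.notMem_empty e)
    · intro e he; rw [hES] at he; exact absurd he (Set.notMem_empty e)
  · obtain ⟨e₀, he₀⟩ := hE
    have hΔ : 1 ≤ G.maxDegree := SStrong.maxDegree_pos_of_mem G he₀
    obtain ⟨c, hPr, hW⟩ := SStrong.exists_min_coloring G hΔ
    refine ⟨fun e => (c e : ℕ), ?_, ?_, ?_⟩
    · intro e _; exact (c e).isLt
    · -- semistrong color classes
      intro i
      set M : Set (Sym2 V) := {e | e ∈ G.edgeSet ∧ ((c e : ℕ) = i)} with hM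
      show IsSemistrongMatching G M
      have hcol : ∀ e ∈ M, ∀ f ∈ M, c e = c f := by
        intro e he f hf
        have h : (c e : ℕ) = (c f : ℕ) := by rw [he.2, hf.2]
        exact Fin.ext h
      have hmatch : IsMatchingSet G M := by
        refine ⟨fun e he => he.1, ?_⟩
        intro e he f hf hne v hv hvf
        exact hPr e (SimpleGraph.mem_edgeFinset.mpr he.1) f
          (SimpleGraph.mem_edgeFinset.mpr hf.1) hne ⟨v, hv, hvf⟩ (hcol e he f hf)
      refine ⟨hmatch, ?_⟩
      intro e heM
      have heE : e ∈ G.edgeFinset := SimpleGraph.mem_edgeFinset.mpr heM.1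
      have hW' : ∑ f ∈ G.edgeFinset.filter
          (fun f => ¬ SStrong.touch e f ∧ c f = c e), SStrong.tc G e f ≤ 1 := hW e heE
      have hKey : ∀ f ∈ M, f ≠ e →
          f ∈ G.edgeFinset.filter (fun f => ¬ SStrong.touch e f ∧ c f = c e) := by
        intro f hfM hfe
        refine Finset.mem_filter.mpr
          ⟨SimpleGraph.mem_edgeFinset.mpr hfM.1, ?_, hcol f hfM e heM⟩
        intro ht
        exact hPr e heE f (SimpleGraph.mem_edgeFinset.mpr hfM.1) (Ne.symm hfe)
          ht (hcol e heM f hfM)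
      by_cases hB : ∃ f, f ∈ M ∧ f ≠ e ∧ SStrong.tc G e f ≠ 0
      · -- one partner at distance two, with a unique connecting edge
        obtain ⟨f₀, hf₀M, hf₀e, hf₀t⟩ := hB
        have hf₀P := hKey f₀ hf₀M hf₀e
        have htone : SStrong.tc G e f₀ = 1 := by
          have h1 : SStrong.tc G e f₀ ≤ ∑ f ∈ G.edgeFinset.filter
              (fun f => ¬ SStrong.touch e f ∧ c f = c e), SStrong.tc G e f :=
            Finset.single_le_sum (fun _ _ => Nat.zero_le _) hf₀P
          omega
        obtain ⟨g, hg⟩ := Finset.card_eq_one.mp htone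
        have hgmem : g ∈ G.edgeFinset.filter
            (fun g' => SStrong.touch g' e ∧ SStrong.touch g' f₀) := by
          rw [show G.edgeFinset.filter
            (fun g' => SStrong.touch g' e ∧ SStrong.touch g' f₀) = {g} from hg]
          exact Finset.mem_singleton_self g
        obtain ⟨hgE, hge, hgf⟩ := Finset.mem_filter.mp hgmem
        obtain ⟨x, hxg, hxe⟩ := hge
        obtain ⟨y, hyg, hyf⟩ := hgf
        have hnt : ¬ SStrong.touch e f₀ := (Finset.mem_filter.mp hf₀P).2.1
        have hxy : x ≠ y := by rintro rfl; exact hnt ⟨x, hxe, hyf⟩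
        have hgxy : g = s(x, y) := (Sym2.mem_and_mem_iff hxy).mp ⟨hxg, hyg⟩
        set u := Sym2.Mem.other' hxe with hu
        have heq : s(x, u) = e := Sym2.other_spec' hxe
        have huE : u ∈ e := Sym2.other_mem' hxe
        have hux : u ≠ x := by
          intro h
          have hd : e.IsDiag := by rw [← heq, h]; exact Sym2.mk_isDiag_iff.mpr rfl
          exact (G.not_isDiag_of_mem_edgeSet heM.1) hd
        refine ⟨u, x, by rw [← heq, Sym2.eq_swap], ?_⟩
        intro w hw hadj
        obtain ⟨f, hfM, hwf⟩ := hw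
        by_cases hfe : f = e
        · rw [hfe, ← heq] at hwf
          rcases Sym2.mem_iff.mp hwf with h | h
          · exact h
          · exact absurd hadj (by rw [h]; exact G.irrefl)
        · have hconn : s(u, w) ∈ G.edgeFinset.filter
              (fun g' => SStrong.touch g' e ∧ SStrong.touch g' f) := by
            refine Finset.mem_filter.mpr
              ⟨SimpleGraph.mem_edgeFinset.mpr hadj, ?_, ?_⟩
            · exact ⟨u, Sym2.mem_mk_left u w, huE⟩
            · exact ⟨w, Sym2.mem_mk_right u w, hwf⟩
          by_cases hff : f = f₀
          · rw [hff] at hconn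
            have hg2 : s(u, w) = g := by
              rw [hg] at hconn
              exact Finset.mem_singleton.mp hconn
            rw [hgxy] at hg2
            rcases Sym2.eq_iff.mp hg2 with ⟨h1, _⟩ | ⟨h1, h2⟩
            · exact absurd h1 hux
            · exact absurd ⟨u, huE, h1 ▸ hyf⟩ hnt
          · have hfP := hKey f hfM hfe
            have hft : 1 ≤ SStrong.tc G e f := by
              rw [Nat.one_le_iff_ne_zero]
              intro h0
              rw [Finset.card_eq_zero.mp h0] at hconn
              exact absurd hconn (Finset.notMem_empty _)
            have hpair : SStrong.tc G e f₀ + SStrong.tc G e f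
                ≤ ∑ f ∈ G.edgeFinset.filter
                  (fun f => ¬ SStrong.touch e f ∧ c f = c e), SStrong.tc G e f := by
              have hsub : ({f₀, f} : Finset (Sym2 V))
                  ⊆ G.edgeFinset.filter (fun f => ¬ SStrong.touch e f ∧ c f = c e) := by
                intro z hz
                rcases Finset.mem_insert.mp hz with rfl | hz
                · exact hf₀P
                · rw [Finset.mem_singleton.mp hz]; exact hfP
              calc SStrong.tc G e f₀ + SStrong.tc G e f
                  = ∑ z ∈ ({f₀, f} : Finset (Sym2 V)), SStrong.tc G e z :=
                    (Finset.sum_pair (Ne.symm hff)).symm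
                _ ≤ _ := Finset.sum_le_sum_of_subset hsub
            omega
      · -- no partner at all
        push_neg at hB
        obtain ⟨u, v, huv⟩ :=
          Sym2.ind (f := fun z => ∃ a b, z = s(a, b)) (fun a b => ⟨a, b, rfl⟩) e
        refine ⟨u, v, huv, ?_⟩
        intro w hw hadj
        obtain ⟨f, hfM, hwf⟩ := hw
        by_cases hfe : f = e
        · rw [hfe, huv] at hwf
          rcases Sym2.mem_iff.mp hwf with h | h
          · exact absurd hadj (by rw [h]; exact G.irrefl)
          · exact h
        · have h0 : SStrong.tc G e f = 0 := hB f hfM hfe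
          have hconn : s(u, w) ∈ G.edgeFinset.filter
              (fun g' => SStrong.touch g' e ∧ SStrong.touch g' f) := by
            refine Finset.mem_filter.mpr
              ⟨SimpleGraph.mem_edgeFinset.mpr hadj, ?_, ?_⟩
            · exact ⟨u, Sym2.mem_mk_left u w, by rw [huv]; exact Sym2.mem_mk_left u v⟩
            · exact ⟨w, Sym2.mem_mk_right u w, hwf⟩
          rw [Finset.card_eq_zero.mp h0] at hconn
          exact absurd hconn (Finset.notMem_empty _)
    · -- (0,1)-relaxed condition
      intro e he f₁ f₂ h1 hc1 h2 hc2
      by_contra hne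
      have heE : e ∈ G.edgeFinset := SimpleGraph.mem_edgeFinset.mpr he
      have hW' : ∑ f ∈ G.edgeFinset.filter
          (fun f => ¬ SStrong.touch e f ∧ c f = c e), SStrong.tc G e f ≤ 1 := hW e heE
      have hmem : ∀ f, AtDistTwo G e f → (c f : ℕ) = (c e : ℕ) →
          f ∈ G.edgeFinset.filter (fun f => ¬ SStrong.touch e f ∧ c f = c e)
            ∧ 1 ≤ SStrong.tc G e f := by
        intro f hf hcf
        obtain ⟨-, hfE, hdisj, g, hgE, hge, hgf⟩ := hf
        have hnt : ¬ SStrong.touch e f := by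
          rintro ⟨v, hv1, hv2⟩; exact hdisj v hv1 hv2
        refine ⟨Finset.mem_filter.mpr
          ⟨SimpleGraph.mem_edgeFinset.mpr hfE, hnt, Fin.ext hcf⟩, ?_⟩
        rw [Nat.one_le_iff_ne_zero]
        intro h0
        have hgmem : g ∈ G.edgeFinset.filter
            (fun g' => SStrong.touch g' e ∧ SStrong.touch g' f) :=
          Finset.mem_filter.mpr ⟨SimpleGraph.mem_edgeFinset.mpr hgE, hge, hgf⟩
        rw [Finset.card_eq_zero.mp h0] at hgmem
        exact absurd hgmem (Finset.notMem_empty _)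
      obtain ⟨hm1, ht1⟩ := hmem f₁ h1 hc1
      obtain ⟨hm2, ht2⟩ := hmem f₂ h2 hc2
      have hpair : SStrong.tc G e f₁ + SStrong.tc G e f₂
          ≤ ∑ f ∈ G.edgeFinset.filter
            (fun f => ¬ SStrong.touch e f ∧ c f = c e), SStrong.tc G e f := by
        have hsub : ({f₁, f₂} : Finset (Sym2 V))
            ⊆ G.edgeFinset.filter (fun f => ¬ SStrong.touch e f ∧ c f = c e) := by
          intro z hz
          rcases Finset.mem_insert.mp hz with rfl | hz
          · exact hm1
          · rw [Finset.mem_singleton.mp hz]; exact hm2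
        calc SStrong.tc G e f₁ + SStrong.tc G e f₂
            = ∑ z ∈ ({f₁, f₂} : Finset (Sym2 V)), SStrong.tc G e z :=
              (Finset.sum_pair hne).symm
          _ ≤ _ := Finset.sum_le_sum_of_subset hsub
      omega
end

section
/- In any semistrong edge-coloring of a finite simple graph G, the four edges of every 4-cycle of G receive four pairwise distinct colors. -/
open SimpleGraph

variable {V : Type*}

lemma adj_ne_color {G : SimpleGraph V} {c : Sym2 V → ℕ}
    (hc : ∀ i : ℕ, IsSemistrongMatching G {e | e ∈ G.edgeSet ∧ c e = i})
    {a b d : V} (hab : G.Adj a b) (hbd : G.Adj b d) (had : a ≠ d) :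
    c s(a, b) ≠ c s(b, d) := by
  intro h
  obtain ⟨⟨_, hM⟩, _⟩ := hc (c s(a, b))
  have he1 : s(a, b) ∈ {e | e ∈ G.edgeSet ∧ c e = c s(a, b)} := ⟨hab, rfl⟩
  have he2 : s(b, d) ∈ {e | e ∈ G.edgeSet ∧ c e = c s(a, b)} := ⟨hbd, h.symm⟩
  have hne : s(a, b) ≠ s(b, d) := by
    rw [Ne, Sym2.eq_iff]
    rintro (⟨rfl, rfl⟩ | ⟨rfl, _⟩)
    · exact hab.ne rfl
    · exact had rfl
  exact hM _ he1 _ he2 hne b (Sym2.mem_mk_right a b) (Sym2.mem_mk_left b d)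

lemma opp_ne_color {G : SimpleGraph V} {c : Sym2 V → ℕ}
    (hc : ∀ i : ℕ, IsSemistrongMatching G {e | e ∈ G.edgeSet ∧ c e = i})
    {v₁ v₂ v₃ v₄ : V}
    (h12 : G.Adj v₁ v₂) (h23 : G.Adj v₂ v₃) (h34 : G.Adj v₃ v₄) (h41 : G.Adj v₄ v₁)
    (h13 : v₁ ≠ v₃) (h24 : v₂ ≠ v₄) :
    c s(v₁, v₂) ≠ c s(v₃, v₄) := by
  intro h
  set M : Set (Sym2 V) := {e | e ∈ G.edgeSet ∧ c e = c s(v₁, v₂)} with hMdef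
  obtain ⟨_, hss⟩ := hc (c s(v₁, v₂))
  have he1 : s(v₁, v₂) ∈ M := ⟨h12, rfl⟩
  have he2 : s(v₃, v₄) ∈ M := ⟨h34, h.symm⟩
  obtain ⟨u, v, huv, hdeg⟩ := hss _ he1
  have hv1 : v₁ ∈ edgeVerts M := ⟨_, he1, Sym2.mem_mk_left v₁ v₂⟩
  have hv2 : v₂ ∈ edgeVerts M := ⟨_, he1, Sym2.mem_mk_right v₁ v₂⟩
  have hv3 : v₃ ∈ edgeVerts M := ⟨_, he2, Sym2.mem_mk_left v₃ v₄⟩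
  have hv4 : v₄ ∈ edgeVerts M := ⟨_, he2, Sym2.mem_mk_right v₃ v₄⟩
  rw [Sym2.eq_iff] at huv
  rcases huv with ⟨rfl, rfl⟩ | ⟨rfl, rfl⟩
  · exact h24 ((hdeg v₂ hv2 h12).trans (hdeg v₄ hv4 h41.symm).symm)
  · exact h13 ((hdeg v₁ hv1 h12.symm).trans (hdeg v₃ hv3 h23).symm)

/-- In any semistrong edge-coloring of a finite simple graph `G`, the four
edges of every `4`-cycle of `G` receive four pairwise distinct colors. -/
theorem semistrong_coloring_rainbow_four_cycle {V : Type*} [Fintype V] [DecidableEq V]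
    (G : SimpleGraph V) (c : Sym2 V → ℕ)
    (hc : ∀ i : ℕ, IsSemistrongMatching G {e | e ∈ G.edgeSet ∧ c e = i})
    (v₁ v₂ v₃ v₄ : V)
    (h12 : G.Adj v₁ v₂) (h23 : G.Adj v₂ v₃) (h34 : G.Adj v₃ v₄) (h41 : G.Adj v₄ v₁)
    (hne : v₁ ≠ v₂ ∧ v₁ ≠ v₃ ∧ v₁ ≠ v₄ ∧ v₂ ≠ v₃ ∧ v₂ ≠ v₄ ∧ v₃ ≠ v₄) :
    c s(v₁, v₂) ≠ c s(v₂, v₃) ∧ c s(v₁, v₂) ≠ c s(v₃, v₄) ∧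
    c s(v₁, v₂) ≠ c s(v₄, v₁) ∧ c s(v₂, v₃) ≠ c s(v₃, v₄) ∧
    c s(v₂, v₃) ≠ c s(v₄, v₁) ∧ c s(v₃, v₄) ≠ c s(v₄, v₁) := by
  obtain ⟨n12, n13, n14, n23, n24, n34⟩ := hne
  refine ⟨adj_ne_color hc h12 h23 n13, opp_ne_color hc h12 h23 h34 h41 n13 n24, ?_,
    adj_ne_color hc h23 h34 n24, opp_ne_color hc h23 h34 h41 h12 n24 n13.symm,
    adj_ne_color hc h34 h41 n13.symm⟩
  exact (adj_ne_color hc h41 h12 n24.symm).symm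
end

section
/- For all positive integers m and n, the semistrong chromatic index of the complete bipartite graph K_{m,n} equals m·n, i.e., χ''_ss(K_{m,n}) = m·n, and this coincides with its strong chromatic index. -/
open SimpleGraph

variable {V : Type*}

/-- `M` is a strong (induced) matching of `G`: a matching such that the subgraph
of `G` induced by the endvertices of `M` contains no edges other than those of `M`. -/
def IsStrongMatching (G : SimpleGraph V) (M : Set (Sym2 V)) : Prop :=
  IsMatchingSet G M ∧
    ∀ u ∈ edgeVerts M, ∀ w ∈ edgeVerts M, G.Adj u w → s(u, w) ∈ M

/-- `G` has a strong edge-coloring with (at most) `k` colors. -/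
def HasStrongEdgeColoring (G : SimpleGraph V) (k : ℕ) : Prop :=
  ∃ c : Sym2 V → ℕ, (∀ e ∈ G.edgeSet, c e < k) ∧
    ∀ i : ℕ, IsStrongMatching G {e | e ∈ G.edgeSet ∧ c e = i}

/-- The strong chromatic index of `G`. -/
noncomputable def strongChromIdx (G : SimpleGraph V) : ℕ :=
  sInf {k | HasStrongEdgeColoring G k}

section Aux

variable {V : Type*}

/-- A subsingleton set of edges is both a semistrong and a strong matching. -/
lemma subsingleton_matchings (G : SimpleGraph V) (M : Set (Sym2 V))
    (hM : M ⊆ G.edgeSet) (hs : ∀ e ∈ M, ∀ f ∈ M, e = f) :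
    IsSemistrongMatching G M ∧ IsStrongMatching G M := by
  have hmatch : IsMatchingSet G M :=
    ⟨hM, fun e he f hf hef => absurd (hs e he f hf) hef⟩
  refine ⟨⟨hmatch, ?_⟩, ⟨hmatch, ?_⟩⟩
  · intro e he
    revert he
    induction e using Sym2.ind with
    | _ u v =>
      intro he
      refine ⟨u, v, rfl, ?_⟩
      intro w hw hadj
      obtain ⟨f, hf, hwf⟩ := hw
      have hfe : f = s(u, v) := hs f hf _ he
      subst hfe
      rcases Sym2.mem_iff.1 hwf with rfl | rfl
      · exact absurd hadj (G.irrefl)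
      · rfl
  · intro a ha b hb hadj
    obtain ⟨f, hf, haf⟩ := ha
    obtain ⟨g, hg, hbg⟩ := hb
    have hgf : g = f := hs g hg f hf
    rw [hgf] at hbg
    have hfab : f = s(a, b) := (Sym2.mem_and_mem_iff hadj.ne).1 ⟨haf, hbg⟩
    exact hfab ▸ hf

end Aux

section KMN

variable {m n : ℕ}

lemma kmn_edge_char {e : Sym2 (Fin m ⊕ Fin n)}
    (he : e ∈ (completeBipartiteGraph (Fin m) (Fin n)).edgeSet) :
    ∃ i j, e = s(Sum.inl i, Sum.inr j) := by
  revert he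
  induction e using Sym2.ind with
  | _ x y =>
    intro he
    rw [SimpleGraph.mem_edgeSet] at he
    rcases he with ⟨hx, hy⟩ | ⟨hx, hy⟩
    · obtain ⟨a, rfl⟩ := Sum.isLeft_iff.1 hx
      obtain ⟨b, rfl⟩ := Sum.isRight_iff.1 hy
      exact ⟨a, b, rfl⟩
    · obtain ⟨b, rfl⟩ := Sum.isRight_iff.1 hx
      obtain ⟨a, rfl⟩ := Sum.isLeft_iff.1 hy
      exact ⟨a, b, Sym2.eq_swap⟩

lemma kmn_adj (i : Fin m) (j : Fin n) :
    (completeBipartiteGraph (Fin m) (Fin n)).Adj (Sum.inl i) (Sum.inr j) := by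
  simp

lemma encode_le {a b c d : ℕ} (_hc : c < n) (hd : d < n)
    (h : a * n + c = b * n + d) : a ≤ b := by
  by_contra hab
  push_neg at hab
  have hbn : b * n + d < a * n + c := by
    have h1 : b * n + n ≤ a * n := by
      have : b + 1 ≤ a := hab
      calc b * n + n = (b + 1) * n := by ring
        _ ≤ a * n := Nat.mul_le_mul_right n this
    omega
  omega

lemma encode_inj {a b c d : ℕ} (hc : c < n) (hd : d < n)
    (h : a * n + c = b * n + d) : a = b ∧ c = d := by
  have hab : a = b := le_antisymm (encode_le hc hd h) (encode_le hd hc h.symm)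
  subst hab
  omega

/-- Any semistrong matching of `K_{m,n}` is a subsingleton. -/
lemma semistrong_subsingleton {M : Set (Sym2 (Fin m ⊕ Fin n))}
    (hM : IsSemistrongMatching (completeBipartiteGraph (Fin m) (Fin n)) M) :
    ∀ e ∈ M, ∀ f ∈ M, e = f := by
  obtain ⟨⟨hsub, hdisj⟩, hsemi⟩ := hM
  intro e he f hf
  by_contra hef
  obtain ⟨u, v, heq, hP⟩ := hsemi e he
  obtain ⟨a, b, hfeq⟩ := kmn_edge_char (hsub hf)
  have hue : u ∈ e := heq ▸ Sym2.mem_mk_left u v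
  have hve : v ∈ e := heq ▸ Sym2.mem_mk_right u v
  rcases u with u₁ | u₁
  · have hwf : (Sum.inr b : Fin m ⊕ Fin n) ∈ f := hfeq ▸ Sym2.mem_mk_right _ _
    have hweV : (Sum.inr b : Fin m ⊕ Fin n) ∈ edgeVerts M := ⟨f, hf, hwf⟩
    have := hP _ hweV (kmn_adj u₁ b)
    exact hdisj e he f hf hef v hve (this ▸ hwf)
  · have hwf : (Sum.inl a : Fin m ⊕ Fin n) ∈ f := hfeq ▸ Sym2.mem_mk_left _ _
    have hweV : (Sum.inl a : Fin m ⊕ Fin n) ∈ edgeVerts M := ⟨f, hf, hwf⟩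
    have hadj : (completeBipartiteGraph (Fin m) (Fin n)).Adj (Sum.inr u₁) (Sum.inl a) :=
      (kmn_adj a u₁).symm
    have := hP _ hweV hadj
    exact hdisj e he f hf hef v hve (this ▸ hwf)

/-- Any strong matching of `K_{m,n}` is a subsingleton. -/
lemma strong_subsingleton {M : Set (Sym2 (Fin m ⊕ Fin n))}
    (hM : IsStrongMatching (completeBipartiteGraph (Fin m) (Fin n)) M) :
    ∀ e ∈ M, ∀ f ∈ M, e = f := by
  obtain ⟨⟨hsub, hdisj⟩, hstr⟩ := hM
  intro e he f hf
  by_contra hef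
  obtain ⟨a, b, heq⟩ := kmn_edge_char (hsub he)
  obtain ⟨c, d, hfeq⟩ := kmn_edge_char (hsub hf)
  have hae : (Sum.inl a : Fin m ⊕ Fin n) ∈ e := heq ▸ Sym2.mem_mk_left _ _
  have hdf : (Sum.inr d : Fin m ⊕ Fin n) ∈ f := hfeq ▸ Sym2.mem_mk_right _ _
  have hg : s(Sum.inl a, Sum.inr d) ∈ M :=
    hstr _ ⟨e, he, hae⟩ _ ⟨f, hf, hdf⟩ (kmn_adj a d)
  by_cases h : e = s(Sum.inl a, Sum.inr d)
  · have hde : (Sum.inr d : Fin m ⊕ Fin n) ∈ e := h ▸ Sym2.mem_mk_right _ _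
    exact hdisj e he f hf hef _ hde hdf
  · exact hdisj e he _ hg h _ hae (Sym2.mem_mk_left _ _)

/-- The rainbow coloring of `K_{m,n}`. -/
def kmnColor (m n : ℕ) : Sym2 (Fin m ⊕ Fin n) → ℕ :=
  Sym2.lift ⟨fun x y =>
    match x, y with
    | Sum.inl i, Sum.inr j => i.val * n + j.val
    | Sum.inr j, Sum.inl i => i.val * n + j.val
    | _, _ => 0,
    by intro x y; rcases x with i | j <;> rcases y with i' | j' <;> rfl⟩

lemma kmnColor_eq (i : Fin m) (j : Fin n) :
    kmnColor m n s(Sum.inl i, Sum.inr j) = i.val * n + j.val := rfl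

lemma kmnColor_lt {e : Sym2 (Fin m ⊕ Fin n)}
    (he : e ∈ (completeBipartiteGraph (Fin m) (Fin n)).edgeSet) :
    kmnColor m n e < m * n := by
  obtain ⟨i, j, rfl⟩ := kmn_edge_char he
  rw [kmnColor_eq]
  have h1 : i.val * n + j.val < (i.val + 1) * n := by
    have := j.isLt
    calc i.val * n + j.val < i.val * n + n := by omega
      _ = (i.val + 1) * n := by ring
  have h2 : (i.val + 1) * n ≤ m * n := Nat.mul_le_mul_right n i.isLt
  omega

lemma kmnColor_classes (t : ℕ) :
    ∀ e ∈ {e | e ∈ (completeBipartiteGraph (Fin m) (Fin n)).edgeSet ∧ kmnColor m n e = t},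
    ∀ f ∈ {e | e ∈ (completeBipartiteGraph (Fin m) (Fin n)).edgeSet ∧ kmnColor m n e = t},
    e = f := by
  rintro e ⟨hee, hec⟩ f ⟨hfe, hfc⟩
  obtain ⟨i, j, rfl⟩ := kmn_edge_char hee
  obtain ⟨i', j', rfl⟩ := kmn_edge_char hfe
  rw [kmnColor_eq] at hec hfc
  have h := hec.trans hfc.symm
  obtain ⟨h1, h2⟩ := encode_inj j.isLt j'.isLt h
  have : i = i' := Fin.ext h1
  have : j = j' := Fin.ext h2
  subst_vars
  rfl

end KMN

/-- For all positive integers `m` and `n`, the semistrong chromatic index of the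
complete bipartite graph `K_{m,n}` equals `m * n`, and this coincides with its
strong chromatic index. -/
theorem ssChromIdx_completeBipartiteGraph (m n : ℕ) (hm : 1 ≤ m) (hn : 1 ≤ n) :
    ssChromIdx (completeBipartiteGraph (Fin m) (Fin n)) = m * n ∧
    strongChromIdx (completeBipartiteGraph (Fin m) (Fin n)) = m * n := by
  set G := completeBipartiteGraph (Fin m) (Fin n) with hG
  have hclasses : ∀ i : ℕ,
      IsSemistrongMatching G {e | e ∈ G.edgeSet ∧ kmnColor m n e = i} ∧
      IsStrongMatching G {e | e ∈ G.edgeSet ∧ kmnColor m n e = i} := fun i =>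
    subsingleton_matchings G _ (fun e he => he.1) (kmnColor_classes i)
  have hmemss : HasSemistrongEdgeColoring G (m * n) :=
    ⟨kmnColor m n, fun e he => kmnColor_lt he, fun i => (hclasses i).1⟩
  have hmemst : HasStrongEdgeColoring G (m * n) :=
    ⟨kmnColor m n, fun e he => kmnColor_lt he, fun i => (hclasses i).2⟩
  have key : ∀ (c : Sym2 (Fin m ⊕ Fin n) → ℕ) (k : ℕ),
      (∀ e ∈ G.edgeSet, c e < k) →
      (∀ i : ℕ, ∀ e ∈ {e | e ∈ G.edgeSet ∧ c e = i},
        ∀ f ∈ {e | e ∈ G.edgeSet ∧ c e = i}, e = f) →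
      m * n ≤ k := by
    intro c k hlt hsub
    have hedge : ∀ p : Fin m × Fin n,
        s(Sum.inl p.1, Sum.inr p.2) ∈ G.edgeSet := fun p =>
      G.mem_edgeSet.2 (kmn_adj p.1 p.2)
    have hinj : Function.Injective
        (fun p : Fin m × Fin n => (⟨c s(Sum.inl p.1, Sum.inr p.2), hlt _ (hedge p)⟩ : Fin k)) := by
      intro p q hpq
      have hcq : c s(Sum.inl p.1, Sum.inr p.2) = c s(Sum.inl q.1, Sum.inr q.2) :=
        congrArg Fin.val hpq
      have heq : s(Sum.inl p.1, Sum.inr p.2) = s(Sum.inl q.1, Sum.inr q.2) :=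
        hsub (c s(Sum.inl p.1, Sum.inr p.2))
          _ ⟨hedge p, rfl⟩ _ ⟨hedge q, hcq.symm⟩
      rw [Sym2.eq_iff] at heq
      rcases heq with ⟨h1, h2⟩ | ⟨h1, h2⟩
      · exact Prod.ext (Sum.inl_injective h1) (Sum.inr_injective h2)
      · exact absurd h1 (by simp)
    have := Fintype.card_le_of_injective _ hinj
    simpa using this
  have lower_ss : ∀ k ∈ {k | HasSemistrongEdgeColoring G k}, m * n ≤ k := by
    rintro k ⟨c, hlt, hcl⟩
    exact key c k hlt (fun i => semistrong_subsingleton (hcl i))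
  have lower_st : ∀ k ∈ {k | HasStrongEdgeColoring G k}, m * n ≤ k := by
    rintro k ⟨c, hlt, hcl⟩
    exact key c k hlt (fun i => strong_subsingleton (hcl i))
  constructor
  · exact le_antisymm (Nat.sInf_le hmemss) (le_csInf ⟨m * n, hmemss⟩ lower_ss)
  · exact le_antisymm (Nat.sInf_le hmemst) (le_csInf ⟨m * n, hmemst⟩ lower_st)
end

section
/- The semistrong chromatic index of the complete bipartite graph K_{3,3} equals 9. -/
open SimpleGraph

variable {V : Type*}

-- auxiliary material
section Aux

abbrev K33 : SimpleGraph (Fin 3 ⊕ Fin 3) := completeBipartiteGraph (Fin 3) (Fin 3)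

lemma edge_shape {e : Sym2 (Fin 3 ⊕ Fin 3)} (he : e ∈ K33.edgeSet) :
    ∃ a b : Fin 3, e = s(Sum.inl a, Sum.inr b) := by
  induction e using Sym2.ind with
  | _ x y =>
    rw [SimpleGraph.mem_edgeSet] at he
    rcases x with a | a <;> rcases y with b | b <;>
      simp only [completeBipartiteGraph_adj, Sum.isLeft_inl, Sum.isRight_inl,
        Sum.isLeft_inr, Sum.isRight_inr, true_and, and_true, false_and, and_false,
        or_false, false_or, or_self] at he
    · exact absurd he (by simp)
    · exact ⟨a, b, rfl⟩
    · exact ⟨b, a, Sym2.eq_swap⟩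
    · exact absurd he (by simp)

lemma subsingleton_ss {W : Type*} (G : SimpleGraph W) (M : Set (Sym2 W))
    (hsub : M ⊆ G.edgeSet) (hone : ∀ e ∈ M, ∀ f ∈ M, e = f) :
    IsSemistrongMatching G M := by
  constructor
  · exact ⟨hsub, fun e he f hf hne => absurd (hone e he f hf) hne⟩
  · intro e he
    induction e using Sym2.ind with
    | _ x y =>
      refine ⟨x, y, rfl, ?_⟩
      intro w hw hadj
      obtain ⟨f, hf, hwf⟩ := hw
      have hef : f = s(x, y) := hone f hf _ he
      subst hef
      rw [Sym2.mem_iff] at hwf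
      rcases hwf with rfl | rfl
      · exact absurd hadj (G.loopless.irrefl _)
      · rfl

lemma ss_subsingleton {M : Set (Sym2 (Fin 3 ⊕ Fin 3))}
    (h : IsSemistrongMatching K33 M)
    {e f : Sym2 (Fin 3 ⊕ Fin 3)} (he : e ∈ M) (hf : f ∈ M) : e = f := by
  by_contra hne
  obtain ⟨⟨hsub, hdisj⟩, hss⟩ := h
  obtain ⟨u, v, heuv, hu⟩ := hss e he
  obtain ⟨a, b, rfl⟩ := edge_shape (hsub hf)
  have hvnf : v ∉ s(Sum.inl a, Sum.inr b) :=
    hdisj e he _ hf hne v (by rw [heuv]; simp)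
  rcases u with cu | cu
  · have hadj : K33.Adj (Sum.inl cu) (Sum.inr b) := by simp
    have : (Sum.inr b : Fin 3 ⊕ Fin 3) = v :=
      hu _ ⟨s(Sum.inl a, Sum.inr b), hf, by simp⟩ hadj
    exact hvnf (this ▸ (by simp : (Sum.inr b : Fin 3 ⊕ Fin 3) ∈ s(Sum.inl a, Sum.inr b)))
  · have hadj : K33.Adj (Sum.inr cu) (Sum.inl a) := by simp
    have : (Sum.inl a : Fin 3 ⊕ Fin 3) = v :=
      hu _ ⟨s(Sum.inl a, Sum.inr b), hf, by simp⟩ hadj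
    exact hvnf (this ▸ (by simp : (Sum.inl a : Fin 3 ⊕ Fin 3) ∈ s(Sum.inl a, Sum.inr b)))

/-- the explicit coloring -/
def col : Sym2 (Fin 3 ⊕ Fin 3) → ℕ :=
  Sym2.lift ⟨fun x y =>
    match x, y with
    | Sum.inl a, Sum.inr b => 3 * a.val + b.val
    | Sum.inr b, Sum.inl a => 3 * a.val + b.val
    | _, _ => 0,
    by intro x y; rcases x with a | a <;> rcases y with b | b <;> rfl⟩

@[simp] lemma col_mk (a b : Fin 3) : col s(Sum.inl a, Sum.inr b) = 3 * a.val + b.val := rfl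

lemma has9 : HasSemistrongEdgeColoring K33 9 := by
  refine ⟨col, ?_, ?_⟩
  · intro e he
    obtain ⟨a, b, rfl⟩ := edge_shape he
    have := a.isLt; have := b.isLt
    simp only [col_mk]; omega
  · intro i
    refine subsingleton_ss _ _ (fun e he => he.1) ?_
    rintro e ⟨heE, hei⟩ f ⟨hfE, hfi⟩
    obtain ⟨a, b, rfl⟩ := edge_shape heE
    obtain ⟨a', b', rfl⟩ := edge_shape hfE
    simp only [col_mk] at hei hfi
    have := a.isLt; have := b.isLt; have := a'.isLt; have := b'.isLt
    have ha : a = a' := by apply Fin.ext; omega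
    have hb : b = b' := by apply Fin.ext; omega
    rw [ha, hb]

def edgeOf (n : Fin 9) : Sym2 (Fin 3 ⊕ Fin 3) :=
  s(Sum.inl ⟨n.val / 3, by have := n.isLt; omega⟩, Sum.inr ⟨n.val % 3, by omega⟩)

lemma edgeOf_mem (n : Fin 9) : edgeOf n ∈ K33.edgeSet := by
  rw [edgeOf, SimpleGraph.mem_edgeSet]; simp

lemma edgeOf_inj : Function.Injective edgeOf := by
  intro m n h
  rw [edgeOf, edgeOf, Sym2.eq_iff] at h
  rcases h with ⟨h1, h2⟩ | ⟨h1, h2⟩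
  · have e1 : m.val / 3 = n.val / 3 := congrArg Fin.val (Sum.inl.inj h1)
    have e2 : m.val % 3 = n.val % 3 := congrArg Fin.val (Sum.inr.inj h2)
    exact Fin.ext (by omega)
  · exact absurd h1 (by simp)

lemma lower_bound {k : ℕ} (hk : HasSemistrongEdgeColoring K33 k) : 9 ≤ k := by
  obtain ⟨c, hlt, hss⟩ := hk
  have hψlt : ∀ n : Fin 9, c (edgeOf n) < k := fun n => hlt _ (edgeOf_mem n)
  have hinj : Function.Injective (fun n : Fin 9 => (⟨c (edgeOf n), hψlt n⟩ : Fin k)) := by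
    intro m n h
    have hc : c (edgeOf m) = c (edgeOf n) := congrArg Fin.val h
    have hm : edgeOf m ∈ {e | e ∈ K33.edgeSet ∧ c e = c (edgeOf n)} := ⟨edgeOf_mem m, hc⟩
    have hn : edgeOf n ∈ {e | e ∈ K33.edgeSet ∧ c e = c (edgeOf n)} := ⟨edgeOf_mem n, rfl⟩
    exact edgeOf_inj (ss_subsingleton (hss (c (edgeOf n))) hm hn)
  have := Fintype.card_le_of_injective _ hinj
  simpa using this

end Aux

/-- The semistrong chromatic index of `K_{3,3}` equals `9`. -/
theorem ssChromIdx_K33 :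
    ssChromIdx (completeBipartiteGraph (Fin 3) (Fin 3)) = 9 := by
  refine le_antisymm (Nat.sInf_le has9) ?_
  exact le_csInf ⟨9, has9⟩ fun k hk => lower_bound hk
end

section
/- Every semistrong matching in the 5-prism (the Cartesian product of the 5-cycle C_5 with K_2) has size at most 2. -/
open SimpleGraph

variable {V : Type*}

/-- The `5`-prism: the Cartesian (box) product of the cycle `C₅` with `K₂`. -/
def fivePrism : SimpleGraph (Fin 5 × Fin 2) :=
  SimpleGraph.cycleGraph 5 □ completeGraph (Fin 2)

instance : DecidableRel (completeGraph (Fin 2)).Adj :=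
  inferInstanceAs (DecidableRel fun a b : Fin 2 => a ≠ b)

instance : DecidableRel fivePrism.Adj := fun _ _ =>
  decidable_of_iff _ (SimpleGraph.boxProd_adj).symm

/-- Abbreviation for the vertex type of the 5-prism. -/
abbrev VP := Fin 5 × Fin 2

/-- The 15 edges of the 5-prism, as ordered pairs. -/
def edgeL : List (VP × VP) := [((0,0),(0,1)), ((0,0),(1,0)), ((0,0),(4,0)), ((0,1),(1,1)), ((0,1),(4,1)), ((1,0),(1,1)), ((1,0),(2,0)), ((1,1),(2,1)), ((2,0),(2,1)), ((2,0),(3,0)), ((2,1),(3,1)), ((3,0),(3,1)), ((3,0),(4,0)), ((3,1),(4,1)), ((4,0),(4,1))]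

def disjP (p q : VP × VP) : Prop := p.1 ≠ q.1 ∧ p.1 ≠ q.2 ∧ p.2 ≠ q.1 ∧ p.2 ≠ q.2

def oneSided (a b : VP) (l : List VP) : Prop := ∀ w ∈ l, fivePrism.Adj a w → w = b

def semiC (p : VP × VP) (l : List VP) : Prop := oneSided p.1 p.2 l ∨ oneSided p.2 p.1 l

def goodTriple (x y z : VP × VP) : Prop :=
  disjP x y ∧ disjP x z ∧ disjP y z ∧
  semiC x [x.1,x.2,y.1,y.2,z.1,z.2] ∧ semiC y [x.1,x.2,y.1,y.2,z.1,z.2] ∧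
  semiC z [x.1,x.2,y.1,y.2,z.1,z.2]

instance (p q : VP × VP) : Decidable (disjP p q) := by unfold disjP; infer_instance
instance (a b : VP) (l : List VP) : Decidable (oneSided a b l) := by
  unfold oneSided; infer_instance
instance (p : VP × VP) (l : List VP) : Decidable (semiC p l) := by
  unfold semiC; infer_instance
instance (x y z : VP × VP) : Decidable (goodTriple x y z) := by
  unfold goodTriple; infer_instance

set_option maxHeartbeats 4000000 in
set_option maxRecDepth 10000 in
theorem keyT : ∀ x ∈ edgeL, ∀ y ∈ edgeL, ∀ z ∈ edgeL, ¬ goodTriple x y z := by decide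

theorem adj_mem : ∀ u v : VP, fivePrism.Adj u v → (u, v) ∈ edgeL ∨ (v, u) ∈ edgeL := by
  decide

/-- Extract an oriented edge from a semistrong matching. -/
lemma extract_pair (M : Set (Sym2 VP)) (hM : IsSemistrongMatching fivePrism M)
    (e : Sym2 VP) (he : e ∈ M) :
    ∃ p : VP × VP, p ∈ edgeL ∧ e = s(p.1, p.2) ∧
      ((∀ w ∈ edgeVerts M, fivePrism.Adj p.1 w → w = p.2) ∨
       (∀ w ∈ edgeVerts M, fivePrism.Adj p.2 w → w = p.1)) := by
  obtain ⟨⟨hsub, hdisj⟩, hss⟩ := hM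
  obtain ⟨u, v, rfl, hcond⟩ := hss e he
  have hadj : fivePrism.Adj u v := by
    have := hsub he
    rwa [SimpleGraph.mem_edgeSet] at this
  rcases adj_mem u v hadj with hm | hm
  · exact ⟨(u, v), hm, rfl, Or.inl hcond⟩
  · exact ⟨(v, u), hm, Sym2.eq_swap, Or.inr hcond⟩

lemma disjP_of (M : Set (Sym2 VP)) (hM : IsSemistrongMatching fivePrism M)
    (e f : Sym2 VP) (he : e ∈ M) (hf : f ∈ M) (hef : e ≠ f)
    (p q : VP × VP) (hep : e = s(p.1, p.2)) (hfq : f = s(q.1, q.2)) :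
    disjP p q := by
  have hdisj := hM.1.2 e he f hf hef
  have h1 : p.1 ∈ e := by rw [hep]; exact Sym2.mem_mk_left _ _
  have h2 : p.2 ∈ e := by rw [hep]; exact Sym2.mem_mk_right _ _
  have hq1 : q.1 ∈ f := by rw [hfq]; exact Sym2.mem_mk_left _ _
  have hq2 : q.2 ∈ f := by rw [hfq]; exact Sym2.mem_mk_right _ _
  refine ⟨?_, ?_, ?_, ?_⟩ <;> intro hEq
  · exact hdisj p.1 h1 (hEq ▸ hq1)
  · exact hdisj p.1 h1 (hEq ▸ hq2)
  · exact hdisj p.2 h2 (hEq ▸ hq1)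
  · exact hdisj p.2 h2 (hEq ▸ hq2)

/-- Every semistrong matching in the `5`-prism has size at most `2`. -/
theorem fivePrism_semistrong_matching_card_le_two
    (M : Finset (Sym2 (Fin 5 × Fin 2)))
    (hM : IsSemistrongMatching fivePrism ↑M) :
    M.card ≤ 2 := by
  by_contra h
  push_neg at h
  obtain ⟨N, hNM, hN3⟩ := Finset.exists_subset_card_eq h
  obtain ⟨e1, e2, e3, h12, h13, h23, rfl⟩ := Finset.card_eq_three.mp hN3
  have he1 : e1 ∈ (↑M : Set (Sym2 VP)) := hNM (by simp)
  have he2 : e2 ∈ (↑M : Set (Sym2 VP)) := hNM (by simp)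
  have he3 : e3 ∈ (↑M : Set (Sym2 VP)) := hNM (by simp)
  obtain ⟨p1, hp1, hep1, hc1⟩ := extract_pair _ hM e1 he1
  obtain ⟨p2, hp2, hep2, hc2⟩ := extract_pair _ hM e2 he2
  obtain ⟨p3, hp3, hep3, hc3⟩ := extract_pair _ hM e3 he3
  have hl : ∀ w ∈ [p1.1, p1.2, p2.1, p2.2, p3.1, p3.2], w ∈ edgeVerts (↑M : Set (Sym2 VP)) := by
    intro w hw
    simp only [List.mem_cons, List.not_mem_nil, or_false] at hw
    rcases hw with rfl | rfl | rfl | rfl | rfl | rfl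
    · exact ⟨e1, he1, by rw [hep1]; exact Sym2.mem_mk_left _ _⟩
    · exact ⟨e1, he1, by rw [hep1]; exact Sym2.mem_mk_right _ _⟩
    · exact ⟨e2, he2, by rw [hep2]; exact Sym2.mem_mk_left _ _⟩
    · exact ⟨e2, he2, by rw [hep2]; exact Sym2.mem_mk_right _ _⟩
    · exact ⟨e3, he3, by rw [hep3]; exact Sym2.mem_mk_left _ _⟩
    · exact ⟨e3, he3, by rw [hep3]; exact Sym2.mem_mk_right _ _⟩
  have hsemi : ∀ (p : VP × VP),
      ((∀ w ∈ edgeVerts (↑M : Set (Sym2 VP)), fivePrism.Adj p.1 w → w = p.2) ∨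
       (∀ w ∈ edgeVerts (↑M : Set (Sym2 VP)), fivePrism.Adj p.2 w → w = p.1)) →
      semiC p [p1.1, p1.2, p2.1, p2.2, p3.1, p3.2] := by
    rintro p (hc | hc)
    · exact Or.inl fun w hw => hc w (hl w hw)
    · exact Or.inr fun w hw => hc w (hl w hw)
  exact keyT p1 hp1 p2 hp2 p3 hp3
    ⟨disjP_of _ hM e1 e2 he1 he2 h12 p1 p2 hep1 hep2,
     disjP_of _ hM e1 e3 he1 he3 h13 p1 p3 hep1 hep3,
     disjP_of _ hM e2 e3 he2 he3 h23 p2 p3 hep2 hep3,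
     hsemi p1 hc1, hsemi p2 hc2, hsemi p3 hc3⟩
end

section
/- For all positive integers n and k with 2k ≤ n, the strong chromatic index and the semistrong chromatic index of the Kneser graph K(n,k) are both equal to the binomial coefficient C(n, 2k). -/
open SimpleGraph

variable {V : Type*}

/-- The Kneser graph `K(n,k)`: vertices are the `k`-element subsets of an
`n`-element set, with two vertices adjacent iff the corresponding subsets are
disjoint. -/
def kneserGraph (n k : ℕ) : SimpleGraph {s : Finset (Fin n) // s.card = k} :=
  SimpleGraph.fromRel (fun s t => Disjoint s.1 t.1)

section Bol
open Finset Polynomial in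
theorem bollobas_skew {N k m : ℕ} (X Y : Fin m → Finset (Fin N))
    (hX : ∀ i, (X i).card = k) (hY : ∀ i, (Y i).card = k)
    (hd : ∀ i, Disjoint (X i) (Y i))
    (hc : ∀ i j, i < j → ¬ Disjoint (X i) (Y j)) :
    m ≤ (2 * k).choose k := by
  classical
  set t : Fin N → ℚ := fun x => ((x : ℕ) : ℚ) with ht
  have htinj : Function.Injective t := by
    intro a b h
    simp only [ht] at h
    exact Fin.val_injective (by exact_mod_cast h)
  set P : Fin m → ℚ[X] := fun i => ∏ x ∈ X i, (Polynomial.X - Polynomial.C (t x)) with hP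
  have hdeg : ∀ i, (P i).natDegree < k + 1 := by
    intro i
    have h1 : (P i).natDegree ≤ ∑ x ∈ X i, (Polynomial.X - Polynomial.C (t x)).natDegree :=
      Polynomial.natDegree_prod_le _ _
    have h2 : ∀ x : Fin N, (Polynomial.X - Polynomial.C (t x)).natDegree = 1 := fun x =>
      Polynomial.natDegree_X_sub_C _
    calc (P i).natDegree ≤ ∑ x ∈ X i, (Polynomial.X - Polynomial.C (t x)).natDegree := h1
      _ = (X i).card := by simp [h2]
      _ < k + 1 := by rw [hX i]; omega
  set Q : Fin m → Fin m → ℚ := fun i j => ∏ y ∈ Y j, (P i).eval (t y) with hQ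
  have hQ0 : ∀ i j, ¬ Disjoint (X i) (Y j) → Q i j = 0 := by
    intro i j hij
    rw [Finset.not_disjoint_iff] at hij
    obtain ⟨x, hxX, hxY⟩ := hij
    refine Finset.prod_eq_zero hxY ?_
    rw [hP]
    simp only [Polynomial.eval_prod]
    refine Finset.prod_eq_zero hxX ?_
    simp
  have hQd : ∀ i, Q i i ≠ 0 := by
    intro i
    rw [hQ]
    refine Finset.prod_ne_zero_iff.2 fun y hy => ?_
    rw [hP]
    simp only [Polynomial.eval_prod]
    refine Finset.prod_ne_zero_iff.2 fun x hx => ?_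
    simp only [Polynomial.eval_sub, Polynomial.eval_X, Polynomial.eval_C]
    refine sub_ne_zero.2 fun hxy => ?_
    exact (hd i).forall_ne_finset hx hy (htinj hxy.symm)
  set T : Finset (Multiset ℕ) :=
    Finset.univ.image (fun μ : Sym (Fin (k+1)) k => (μ : Multiset (Fin (k+1))).map Fin.val) with hT
  have hTcard : T.card = (2 * k).choose k := by
    rw [hT, Finset.card_image_of_injective _
      (fun a b hab => Sym.coe_injective (Multiset.map_injective Fin.val_injective hab))]
    rw [Finset.card_univ, Sym.card_sym_eq_choose]
    congr 1
    simp only [Fintype.card_fin]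
    omega
  set φ : (j : Fin m) → ((a : Fin N) → a ∈ Y j → ℕ) → Multiset ℕ :=
    fun j g => ((Y j).attach.val.map (fun y => g y.1 y.2)) with hφ
  have hmaps : ∀ j, ∀ g ∈ (Y j).pi (fun _ => Finset.range (k+1)), φ j g ∈ T := by
    intro j g hg
    rw [Finset.mem_pi] at hg
    have hb : ∀ d ∈ φ j g, d < k + 1 := by
      intro d hd
      rw [hφ] at hd
      simp only [Multiset.mem_map] at hd
      obtain ⟨y, hy, rfl⟩ := hd
      simpa using hg y.1 y.2
    rw [hT, Finset.mem_image]
    refine ⟨⟨(φ j g).pmap (fun a ha => (⟨a, ha⟩ : Fin (k+1))) hb, ?_⟩, Finset.mem_univ _, ?_⟩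
    · show Multiset.card _ = k
      rw [Multiset.card_pmap, hφ]
      simp only [Multiset.card_map]
      show #((Y j).attach) = k
      rw [Finset.card_attach]
      exact hY j
    · show Multiset.map Fin.val ((φ j g).pmap (fun a ha => (⟨a, ha⟩ : Fin (k+1))) hb) = φ j g
      rw [Multiset.map_pmap]
      exact (Multiset.pmap_eq_map _ (fun a => a) _ hb).trans (Multiset.map_id _)
  set uu : Fin m → Multiset ℕ → ℚ :=
    fun i μ => (Multiset.map (fun d => (P i).coeff d) μ).prod with huu
  set vv : Fin m → Multiset ℕ → ℚ := fun j μ =>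
    ∑ g ∈ ((Y j).pi (fun _ => Finset.range (k+1))).filter (fun g => φ j g = μ),
      ∏ y ∈ (Y j).attach, (t y.1) ^ (g y.1 y.2) with hvv
  have key : ∀ i j, Q i j = ∑ μ ∈ T, uu i μ * vv j μ := by
    intro i j
    have e1 : ∀ y ∈ Y j, (P i).eval (t y) = ∑ d ∈ Finset.range (k+1), (P i).coeff d * (t y)^d :=
      fun y _ => Polynomial.eval_eq_sum_range' (hdeg i) (t y)
    have e2 : Q i j = ∑ g ∈ (Y j).pi (fun _ => Finset.range (k+1)),
        uu i (φ j g) * ∏ y ∈ (Y j).attach, (t y.1) ^ (g y.1 y.2) := by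
      show (∏ y ∈ Y j, (P i).eval (t y)) = _
      rw [Finset.prod_congr rfl e1, Finset.prod_sum]
      refine Finset.sum_congr rfl fun g hg => ?_
      rw [Finset.prod_mul_distrib]
      congr 1
      simp only [huu, hφ, Multiset.map_map]
      rfl
    rw [e2, ← Finset.sum_fiberwise_of_maps_to (hmaps j)]
    refine Finset.sum_congr rfl fun μ hμ => ?_
    rw [hvv, Finset.mul_sum]
    refine Finset.sum_congr rfl fun g hg => ?_
    rw [Finset.mem_filter] at hg
    rw [hg.2]
  -- linear independence
  have hli : LinearIndependent ℚ (fun i : Fin m => (fun μ : {x // x ∈ T} => uu i μ.1)) := by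
    rw [Fintype.linearIndependent_iff]
    intro c hcsum
    by_contra hcon
    push_neg at hcon
    obtain ⟨iw, hiw⟩ := hcon
    set S : Finset (Fin m) := Finset.univ.filter (fun i => c i ≠ 0) with hS
    have hSne : S.Nonempty := ⟨iw, by simp [hS, hiw]⟩
    set i0 := S.max' hSne with hi0
    have hi0S : i0 ∈ S := S.max'_mem hSne
    have hzero : ∀ μ ∈ T, ∑ i, c i * uu i μ = 0 := by
      intro μ hμ
      have := congrFun hcsum ⟨μ, hμ⟩
      simpa using this
    have h1 : ∑ i, c i * Q i i0 = 0 := by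
      have : ∑ i, c i * Q i i0 = ∑ μ ∈ T, (∑ i, c i * uu i μ) * vv i0 μ := by
        simp_rw [key, Finset.mul_sum, Finset.sum_mul]
        rw [Finset.sum_comm]
        refine Finset.sum_congr rfl fun μ _ => Finset.sum_congr rfl fun i _ => by ring
      rw [this]
      refine Finset.sum_eq_zero fun μ hμ => by rw [hzero μ hμ, zero_mul]
    have h2 : ∑ i, c i * Q i i0 = c i0 * Q i0 i0 := by
      refine Finset.sum_eq_single i0 (fun i _ hne => ?_) (by simp)
      by_cases hci : c i = 0
      · rw [hci, zero_mul]
      · have hiS : i ∈ S := by simp [hS, hci]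
        have : i < i0 := lt_of_le_of_ne (S.le_max' i hiS) hne
        rw [hQ0 i i0 (hc i i0 this), mul_zero]
    rw [h2] at h1
    have : c i0 = 0 := by
      rcases mul_eq_zero.1 h1 with h | h
      · exact h
      · exact absurd h (hQd i0)
    rw [hS] at hi0S
    simp only [Finset.mem_filter] at hi0S
    exact hi0S.2 this
  have := hli.fintype_card_le_finrank
  rw [Fintype.card_fin] at this
  calc m ≤ Module.finrank ℚ ({x // x ∈ T} → ℚ) := this
    _ = Fintype.card {x // x ∈ T} := Module.finrank_pi ℚ
    _ = T.card := Fintype.card_coe T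
    _ = (2 * k).choose k := hTcard
end Bol
-- graph-side development, to be merged after the given definitions
section KneserDev

variable {n k : ℕ}

abbrev KV (n k : ℕ) := {s : Finset (Fin n) // s.card = k}

theorem kneser_adj_of_disjoint (hk : 1 ≤ k) {u v : KV n k} (h : Disjoint u.1 v.1) :
    (kneserGraph n k).Adj u v := by
  refine (SimpleGraph.fromRel_adj _ u v).2 ⟨?_, Or.inl h⟩
  rintro rfl
  have := u.2
  rw [(Finset.disjoint_self_iff_empty _).1 h, Finset.card_empty] at this
  omega

theorem kneser_disjoint_of_adj {u v : KV n k} (h : (kneserGraph n k).Adj u v) :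
    Disjoint u.1 v.1 := by
  rcases (SimpleGraph.fromRel_adj _ u v).1 h with ⟨-, h' | h'⟩
  · exact h'
  · exact h'.symm

/-- The union of the two endpoints of an edge. -/
def unionOf (n k : ℕ) : Sym2 (KV n k) → Finset (Fin n) :=
  Sym2.lift ⟨fun a b => a.1 ∪ b.1, fun a b => Finset.union_comm _ _⟩

theorem unionOf_mk (a b : KV n k) : unionOf n k s(a, b) = a.1 ∪ b.1 := rfl

theorem card_unionOf {e : Sym2 (KV n k)} (he : e ∈ (kneserGraph n k).edgeSet) :
    (unionOf n k e).card = 2 * k := by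
  induction e with
  | _ a b =>
    rw [SimpleGraph.mem_edgeSet] at he
    rw [unionOf_mk, Finset.card_union_of_disjoint (kneser_disjoint_of_adj he), a.2, b.2, two_mul]

theorem mem_unionOf {e : Sym2 (KV n k)} {v : KV n k} (hv : v ∈ e) : v.1 ⊆ unionOf n k e := by
  obtain ⟨w, rfl⟩ := Sym2.mem_iff_exists.1 hv
  rw [unionOf_mk]
  exact Finset.subset_union_left

theorem edge_eq_of_mem_of_unionOf_eq {e f : Sym2 (KV n k)} {v : KV n k}
    (he : e ∈ (kneserGraph n k).edgeSet) (hf : f ∈ (kneserGraph n k).edgeSet)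
    (hve : v ∈ e) (hvf : v ∈ f) (huv : unionOf n k e = unionOf n k f) : e = f := by
  obtain ⟨w, rfl⟩ := Sym2.mem_iff_exists.1 hve
  obtain ⟨w', rfl⟩ := Sym2.mem_iff_exists.1 hvf
  rw [SimpleGraph.mem_edgeSet] at he hf
  have h1 : w.1 = unionOf n k s(v, w) \ v.1 := by
    rw [unionOf_mk, Finset.union_sdiff_cancel_left (kneser_disjoint_of_adj he)]
  have h2 : w'.1 = unionOf n k s(v, w') \ v.1 := by
    rw [unionOf_mk, Finset.union_sdiff_cancel_left (kneser_disjoint_of_adj hf)]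
  have : w = w' := Subtype.ext (by rw [h1, h2, huv])
  rw [this]

end KneserDev
section Dev2

variable {n k : ℕ}

theorem IsStrongMatching.semistrong {V : Type*} {G : SimpleGraph V} {M : Set (Sym2 V)}
    (h : IsStrongMatching G M) : IsSemistrongMatching G M := by
  refine ⟨h.1, fun e he => ?_⟩
  have heE : e ∈ G.edgeSet := h.1.1 he
  induction e with
  | _ u v =>
    refine ⟨u, v, rfl, fun w hw hadj => ?_⟩
    have huV : u ∈ edgeVerts M := ⟨s(u, v), he, Sym2.mem_mk_left _ _⟩
    have hmem : s(u, w) ∈ M := h.2 u huV w hw hadj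
    by_cases heq : s(u, w) = s(u, v)
    · rcases Sym2.eq_iff.1 heq with ⟨-, h2⟩ | ⟨h1, h2⟩
      · exact h2
      · subst h2
        exact absurd hadj (G.irrefl)
    · exact absurd (Sym2.mem_mk_left u w) (h.1.2 _ hmem _ he heq u · (Sym2.mem_mk_left u v))

/-- An encoding of the `2k`-subsets by numbers below `C(n, 2k)`. -/
noncomputable def kneserEnc (n k : ℕ) :
    {U : Finset (Fin n) // U.card = 2 * k} ≃ Fin (n.choose (2 * k)) :=
  Fintype.equivFinOfCardEq (by rw [Fintype.card_finset_len, Fintype.card_fin])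

/-- The canonical strong edge-coloring of the Kneser graph: color by union of endpoints. -/
noncomputable def kneserCol (n k : ℕ) (hkn : 2 * k ≤ n) : Sym2 (KV n k) → ℕ :=
  fun e =>
    if h : (unionOf n k e).card = 2 * k then (kneserEnc n k ⟨unionOf n k e, h⟩ : ℕ)
    else 0

theorem kneserCol_lt (hkn : 2 * k ≤ n) {e : Sym2 (KV n k)}
    (he : e ∈ (kneserGraph n k).edgeSet) : kneserCol n k hkn e < n.choose (2 * k) := by
  simp only [kneserCol]
  rw [dif_pos (card_unionOf he)]
  exact Fin.is_lt _

theorem unionOf_eq_of_col_eq (hkn : 2 * k ≤ n) {e f : Sym2 (KV n k)}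
    (he : e ∈ (kneserGraph n k).edgeSet) (hf : f ∈ (kneserGraph n k).edgeSet)
    (hc : kneserCol n k hkn e = kneserCol n k hkn f) : unionOf n k e = unionOf n k f := by
  simp only [kneserCol] at hc
  rw [dif_pos (card_unionOf he), dif_pos (card_unionOf hf)] at hc
  have := (kneserEnc n k).injective (Fin.val_injective hc)
  exact congrArg Subtype.val this

theorem kneserCol_strong (hk : 1 ≤ k) (hkn : 2 * k ≤ n) (i : ℕ) :
    IsStrongMatching (kneserGraph n k)
      {e | e ∈ (kneserGraph n k).edgeSet ∧ kneserCol n k hkn e = i} := by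
  constructor
  · constructor
    · intro e he
      exact he.1
    · rintro e ⟨heE, heC⟩ f ⟨hfE, hfC⟩ hne v hve hvf
      exact hne (edge_eq_of_mem_of_unionOf_eq heE hfE hve hvf
        (unionOf_eq_of_col_eq hkn heE hfE (heC.trans hfC.symm)))
  · rintro u ⟨e, ⟨heE, heC⟩, hue⟩ w ⟨f, ⟨hfE, hfC⟩, hwf⟩ hadj
    have hU : unionOf n k e = unionOf n k f :=
      unionOf_eq_of_col_eq hkn heE hfE (heC.trans hfC.symm)
    have hsub : u.1 ∪ w.1 ⊆ unionOf n k e := by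
      refine Finset.union_subset (mem_unionOf hue) ?_
      rw [hU]
      exact mem_unionOf hwf
    have hcard : (u.1 ∪ w.1).card = 2 * k := by
      rw [Finset.card_union_of_disjoint (kneser_disjoint_of_adj hadj), u.2, w.2, two_mul]
    have hUeq : u.1 ∪ w.1 = unionOf n k e := by
      refine Finset.eq_of_subset_of_card_le hsub ?_
      rw [hcard, card_unionOf heE]
    have hswE : s(u, w) ∈ (kneserGraph n k).edgeSet := (SimpleGraph.mem_edgeSet _).2 hadj
    refine ⟨hswE, ?_⟩
    rw [← heC]
    simp only [kneserCol]
    rw [dif_pos (card_unionOf hswE), dif_pos (card_unionOf heE)]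
    have huw : (⟨unionOf n k s(u, w), card_unionOf hswE⟩ :
        {U : Finset (Fin n) // U.card = 2 * k}) = ⟨unionOf n k e, card_unionOf heE⟩ :=
      Subtype.ext (by show unionOf n k s(u, w) = unionOf n k e; rw [unionOf_mk]; exact hUeq)
    exact congrArg (fun z => (kneserEnc n k z : ℕ)) huw

theorem kneser_hasStrong (hk : 1 ≤ k) (hkn : 2 * k ≤ n) :
    HasStrongEdgeColoring (kneserGraph n k) (n.choose (2 * k)) :=
  ⟨kneserCol n k hkn, fun _ he => kneserCol_lt hkn he, kneserCol_strong hk hkn⟩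

end Dev2
section Dev3

variable {n k : ℕ}

instance kneserDecAdj : DecidableRel (kneserGraph n k).Adj := fun a b =>
  decidable_of_iff (a ≠ b ∧ (Disjoint a.1 b.1 ∨ Disjoint b.1 a.1))
    (by unfold kneserGraph; exact (SimpleGraph.fromRel_adj (fun s t : KV n k => Disjoint s.1 t.1) a b).symm)

theorem kneser_degree (hk : 1 ≤ k) (hkn : 2 * k ≤ n) (v : KV n k) :
    (kneserGraph n k).degree v = (n - k).choose k := by
  classical
  rw [← SimpleGraph.card_neighborFinset_eq_degree]
  have hbij : ((kneserGraph n k).neighborFinset v).card =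
      (Finset.powersetCard k (Finset.univ \ v.1)).card := by
    refine Finset.card_bij (fun w _ => w.1) ?_ ?_ ?_
    · intro w hw
      rw [SimpleGraph.mem_neighborFinset] at hw
      rw [Finset.mem_powersetCard]
      exact ⟨Finset.subset_sdiff.2 ⟨Finset.subset_univ _,
        (kneser_disjoint_of_adj hw.symm)⟩, w.2⟩
    · intro a _ b _ hab
      exact Subtype.ext hab
    · intro S hS
      rw [Finset.mem_powersetCard] at hS
      refine ⟨⟨S, hS.2⟩, ?_, rfl⟩
      rw [SimpleGraph.mem_neighborFinset]
      exact (kneser_adj_of_disjoint hk ((Finset.subset_sdiff.1 hS.1).2)).symm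
  rw [hbij, Finset.card_powersetCard, Finset.card_sdiff_of_subset (Finset.subset_univ _),
    Finset.card_univ, Fintype.card_fin, v.2]

theorem kneser_two_mul_edges (hk : 1 ≤ k) (hkn : 2 * k ≤ n) :
    2 * ((kneserGraph n k).edgeFinset.card) = n.choose k * (n - k).choose k := by
  classical
  rw [← SimpleGraph.sum_degrees_eq_twice_card_edges,
    Finset.sum_congr rfl (fun v _ => kneser_degree hk hkn v), Finset.sum_const,
    Finset.card_univ, Fintype.card_finset_len, Fintype.card_fin, smul_eq_mul]

theorem kneser_choose_id (hkn : 2 * k ≤ n) :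
    n.choose k * (n - k).choose k = n.choose (2 * k) * (2 * k).choose k := by
  have h1 : k ≤ n := by omega
  have h2 : k ≤ n - k := by omega
  have e1 : (n - k) - k = n - 2 * k := by omega
  have e2 : 2 * k - k = k := by omega
  have f1 : (n - k).choose k * k.factorial * (n - 2 * k).factorial = (n - k).factorial := by
    have := Nat.choose_mul_factorial_mul_factorial h2
    rwa [e1] at this
  have f2 : (2 * k).choose k * k.factorial * k.factorial = (2 * k).factorial := by
    have := Nat.choose_mul_factorial_mul_factorial (show k ≤ 2 * k by omega)
    rwa [e2] at this
  refine Nat.eq_of_mul_eq_mul_right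
    (Nat.mul_pos (Nat.mul_pos k.factorial_pos k.factorial_pos) (n - 2 * k).factorial_pos) ?_
  have lhs : n.choose k * (n - k).choose k *
      (k.factorial * k.factorial * (n - 2 * k).factorial) = n.factorial := by
    calc n.choose k * (n - k).choose k * (k.factorial * k.factorial * (n - 2 * k).factorial)
        = (n.choose k * k.factorial) *
          ((n - k).choose k * k.factorial * (n - 2 * k).factorial) := by ring
      _ = (n.choose k * k.factorial) * (n - k).factorial := by rw [f1]
      _ = n.factorial := Nat.choose_mul_factorial_mul_factorial h1
  have rhs : n.choose (2 * k) * (2 * k).choose k *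
      (k.factorial * k.factorial * (n - 2 * k).factorial) = n.factorial := by
    calc n.choose (2 * k) * (2 * k).choose k *
          (k.factorial * k.factorial * (n - 2 * k).factorial)
        = ((2 * k).choose k * k.factorial * k.factorial) *
          (n.choose (2 * k) * (n - 2 * k).factorial) := by ring
      _ = (2 * k).factorial * (n.choose (2 * k) * (n - 2 * k).factorial) := by rw [f2]
      _ = n.choose (2 * k) * (2 * k).factorial * (n - 2 * k).factorial := by ring
      _ = n.factorial := Nat.choose_mul_factorial_mul_factorial hkn
  rw [lhs, rhs]

end Dev3
section Dev4

variable {n k : ℕ}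

theorem semistrong_finset_card (hk : 1 ≤ k) {M : Set (Sym2 (KV n k))}
    (hss : IsSemistrongMatching (kneserGraph n k) M) (F : Finset (Sym2 (KV n k)))
    (hFM : ∀ e, e ∈ F ↔ e ∈ M) : 2 * F.card ≤ (2 * k).choose k := by
  classical
  obtain ⟨⟨hsub, hmat⟩, hpend⟩ := hss
  choose A B hAB hP using hpend
  have hedge : ∀ e (he : e ∈ M), (kneserGraph n k).Adj (A e he) (B e he) := by
    intro e he
    have h1 := hsub he
    rw [hAB e he] at h1
    exact (SimpleGraph.mem_edgeSet _).1 h1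
  have hdAB : ∀ e (he : e ∈ M), Disjoint (A e he).1 (B e he).1 :=
    fun e he => kneser_disjoint_of_adj (hedge e he)
  have hAe : ∀ e (he : e ∈ M), A e he ∈ e := fun e he => by
    have h1 := Sym2.mem_mk_left (A e he) (B e he)
    rwa [← hAB e he] at h1
  have hBe : ∀ e (he : e ∈ M), B e he ∈ e := fun e he => by
    have h1 := Sym2.mem_mk_right (A e he) (B e he)
    rwa [← hAB e he] at h1
  have hvertB : ∀ e (he : e ∈ M), B e he ∈ edgeVerts M := fun e he => ⟨e, he, hBe e he⟩
  have c1 : ∀ e (he : e ∈ M) f (hf : f ∈ M), e ≠ f →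
      ¬ Disjoint (A e he).1 (B f hf).1 := by
    intro e he f hf hne hd
    have hadj := kneser_adj_of_disjoint hk hd
    have heq := hP e he (B f hf) (hvertB f hf) hadj
    have : B f hf ∈ e := by rw [heq]; exact hBe e he
    exact hmat e he f hf hne (B f hf) this (hBe f hf)
  have c2 : ∀ e (he : e ∈ M) f (hf : f ∈ M), e ≠ f →
      ¬ Disjoint (A e he).1 (A f hf).1 := by
    intro e he f hf hne hd
    have hadj := kneser_adj_of_disjoint hk hd
    have heq := hP e he (A f hf) ⟨f, hf, hAe f hf⟩ hadj
    have : A f hf ∈ e := by rw [heq]; exact hBe e he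
    exact hmat e he f hf hne (A f hf) this (hAe f hf)
  have c3 : ∀ e (he : e ∈ M) f (hf : f ∈ M), e ≠ f →
      ¬ Disjoint (B e he).1 (A f hf).1 := by
    intro e he f hf hne hd
    have hadj := kneser_adj_of_disjoint hk hd.symm
    have heq := hP f hf (B e he) (hvertB e he) hadj
    have : B e he ∈ f := by rw [heq]; exact hBe f hf
    exact hmat e he f hf hne (B e he) (hBe e he) this
  have cself : ∀ e (he : e ∈ M), ¬ Disjoint (A e he).1 (A e he).1 := by
    intro e he hd
    have h1 := (A e he).2
    rw [(Finset.disjoint_self_iff_empty _).1 hd, Finset.card_empty] at h1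
    omega
  set m := F.card with hm
  have hcardF : Fintype.card {x // x ∈ F} = m := Fintype.card_coe F
  set g : Fin m → {x // x ∈ F} :=
    fun i => (Fintype.equivFin {x // x ∈ F}).symm (Fin.cast hcardF.symm i) with hg
  have hginj : Function.Injective g := fun a b h => by
    have h1 := (Fintype.equivFin {x // x ∈ F}).symm.injective h
    have h2 : (a : ℕ) = b := by simpa using congrArg Fin.val h1
    exact Fin.val_injective h2
  have hMem : ∀ i, (g i : Sym2 (KV n k)) ∈ M := fun i => (hFM _).1 (g i).2
  have hne : ∀ i j : Fin m, i ≠ j → (g i : Sym2 (KV n k)) ≠ (g j : Sym2 (KV n k)) :=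
    fun i j hij h => hij (hginj (Subtype.ext h))
  set AA : Fin m → Finset (Fin n) := fun i => (A (g i) (hMem i)).1 with hAA
  set BB : Fin m → Finset (Fin n) := fun i => (B (g i) (hMem i)).1 with hBB
  set X : Fin (m + m) → Finset (Fin n) := Fin.append AA BB with hX
  set Y : Fin (m + m) → Finset (Fin n) := Fin.append BB AA with hY
  have hrep : ∀ i : Fin (m + m), (∃ i', i = Fin.castAdd m i') ∨ (∃ i', i = Fin.natAdd m i') :=
    fun i => Fin.addCases (fun i' => Or.inl ⟨i', rfl⟩) (fun i' => Or.inr ⟨i', rfl⟩) i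
  have hXcard : ∀ i, (X i).card = k := by
    intro i
    rcases hrep i with ⟨i', rfl⟩ | ⟨i', rfl⟩
    · rw [hX, Fin.append_left, hAA]; exact (A _ _).2
    · rw [hX, Fin.append_right, hBB]; exact (B _ _).2
  have hYcard : ∀ i, (Y i).card = k := by
    intro i
    rcases hrep i with ⟨i', rfl⟩ | ⟨i', rfl⟩
    · rw [hY, Fin.append_left, hBB]; exact (B _ _).2
    · rw [hY, Fin.append_right, hAA]; exact (A _ _).2
  have hdiag : ∀ i, Disjoint (X i) (Y i) := by
    intro i
    rcases hrep i with ⟨i', rfl⟩ | ⟨i', rfl⟩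
    · rw [hX, hY, Fin.append_left, Fin.append_left, hAA, hBB]; exact hdAB _ _
    · rw [hX, hY, Fin.append_right, Fin.append_right, hAA, hBB]; exact (hdAB _ _).symm
  have hcross : ∀ i j, i < j → ¬ Disjoint (X i) (Y j) := by
    intro i j hij
    rcases hrep i with ⟨i', rfl⟩ | ⟨i', rfl⟩ <;> rcases hrep j with ⟨j', rfl⟩ | ⟨j', rfl⟩
    · -- castAdd, castAdd : A vs B, distinct edges
      rw [hX, hY, Fin.append_left, Fin.append_left, hAA, hBB]
      have hlt : i' < j' := by
        rw [Fin.lt_def] at hij ⊢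
        simpa using hij
      exact c1 _ _ _ _ (hne i' j' (Fin.ne_of_lt hlt))
    · -- castAdd, natAdd : A vs A
      rw [hX, hY, Fin.append_left, Fin.append_right, hAA]
      by_cases hij' : i' = j'
      · subst hij'
        exact cself _ _
      · exact c2 _ _ _ _ (hne i' j' hij')
    · -- natAdd, castAdd : impossible
      exfalso
      rw [Fin.lt_def] at hij
      simp only [Fin.coe_natAdd, Fin.coe_castAdd] at hij
      omega
    · -- natAdd, natAdd : B vs A, distinct edges
      rw [hX, hY, Fin.append_right, Fin.append_right, hAA, hBB]
      have hlt : i' < j' := by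
        rw [Fin.lt_def] at hij ⊢
        simp only [Fin.coe_natAdd] at hij
        omega
      exact c3 _ _ _ _ (hne i' j' (Fin.ne_of_lt hlt))
  have hb := bollobas_skew X Y hXcard hYcard hdiag hcross
  omega

end Dev4
section Assembly

variable {n k : ℕ}

theorem kneser_lower (hk : 1 ≤ k) (hkn : 2 * k ≤ n) {K : ℕ}
    (h : HasSemistrongEdgeColoring (kneserGraph n k) K) : n.choose (2 * k) ≤ K := by
  classical
  obtain ⟨c, hlt, hcls⟩ := h
  have hpart : ((kneserGraph n k).edgeFinset).card =
      ∑ i ∈ Finset.range K, (((kneserGraph n k).edgeFinset).filter (fun e => c e = i)).card := by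
    refine Finset.card_eq_sum_card_fiberwise ?_
    intro e he
    rw [Finset.mem_coe, Finset.mem_range]
    exact hlt e (SimpleGraph.mem_edgeFinset.1 he)
  have hclass : ∀ i, 2 * (((kneserGraph n k).edgeFinset).filter (fun e => c e = i)).card ≤
      (2 * k).choose k := by
    intro i
    refine semistrong_finset_card hk (hcls i) _ ?_
    intro e
    rw [Finset.mem_filter, SimpleGraph.mem_edgeFinset]
    exact Iff.rfl
  have h2 : 2 * ((kneserGraph n k).edgeFinset).card ≤ K * ((2 * k).choose k) := by
    rw [hpart, Finset.mul_sum]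
    calc ∑ i ∈ Finset.range K,
          2 * (((kneserGraph n k).edgeFinset).filter (fun e => c e = i)).card
        ≤ ∑ _i ∈ Finset.range K, (2 * k).choose k :=
          Finset.sum_le_sum fun i _ => hclass i
      _ = K * ((2 * k).choose k) := by rw [Finset.sum_const, Finset.card_range, smul_eq_mul]
  rw [kneser_two_mul_edges hk hkn, kneser_choose_id hkn] at h2
  exact Nat.le_of_mul_le_mul_right h2 (Nat.choose_pos (by omega))

end Assembly

/-- For all positive integers `n` and `k` with `2k ≤ n`, the strong chromatic
index and the semistrong chromatic index of the Kneser graph `K(n,k)` are both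
equal to `C(n, 2k)`. -/
theorem chromIdx_kneserGraph (n k : ℕ) (hk : 1 ≤ k) (hkn : 2 * k ≤ n) :
    strongChromIdx (kneserGraph n k) = n.choose (2 * k) ∧
    ssChromIdx (kneserGraph n k) = n.choose (2 * k) := by
  have hstrong := kneser_hasStrong hk hkn
  have hsemis : HasSemistrongEdgeColoring (kneserGraph n k) (n.choose (2 * k)) := by
    obtain ⟨c, h1, h2⟩ := hstrong
    exact ⟨c, h1, fun i => (h2 i).semistrong⟩
  have hub_s : strongChromIdx (kneserGraph n k) ≤ n.choose (2 * k) :=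
    Nat.sInf_le (kneser_hasStrong hk hkn)
  have hub_ss : ssChromIdx (kneserGraph n k) ≤ n.choose (2 * k) := Nat.sInf_le hsemis
  have hlb_ss : n.choose (2 * k) ≤ ssChromIdx (kneserGraph n k) := by
    refine le_csInf ⟨_, hsemis⟩ ?_
    intro K hK
    exact kneser_lower hk hkn hK
  have hlb_s : n.choose (2 * k) ≤ strongChromIdx (kneserGraph n k) := by
    refine le_csInf ⟨_, kneser_hasStrong hk hkn⟩ ?_
    intro K hK
    obtain ⟨c, h1, h2⟩ := hK
    exact kneser_lower hk hkn ⟨c, h1, fun i => (h2 i).semistrong⟩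
  exact ⟨le_antisymm hub_s hlb_s, le_antisymm hub_ss hlb_ss⟩
end

section
/- For every finite tree T (a finite connected acyclic simple graph) with at least one edge and diameter at most 4, the semistrong chromatic index of T equals Δ(T). -/
open SimpleGraph

variable {V : Type*}

section Aux

set_option linter.unusedSectionVars false
set_option linter.unusedVariables false
set_option maxHeartbeats 1000000

variable [Fintype V] [DecidableEq V] {T : SimpleGraph V} [DecidableRel T.Adj]

lemma tree_path_length (hT : T.IsTree) {u v : V} (p : T.Walk u v) (hp : p.IsPath) :
    p.length = T.dist u v := by
  obtain ⟨q, hq, hql⟩ := hT.isConnected.exists_path_of_dist u v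
  have : (⟨p, hp⟩ : T.Path u v) = ⟨q, hq⟩ := hT.IsAcyclic.path_unique _ _
  rw [← hql]
  exact congrArg Walk.length (congrArg Subtype.val this)

/-- The split lemma: if `w` is on `a`'s side of edge `ab` and `z` on `b`'s side,
the distance from `w` to `z` goes through the edge. -/
lemma tree_split (hT : T.IsTree) {a b w z : V} (hab : T.Adj a b)
    (hw : T.dist w a < T.dist w b) (hz : T.dist z b < T.dist z a) :
    T.dist w z = T.dist w a + 1 + T.dist b z := by
  obtain ⟨p, hp, hpl⟩ := hT.isConnected.exists_path_of_dist w a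
  obtain ⟨q, hq, hql⟩ := hT.isConnected.exists_path_of_dist b z
  have hdisj : ∀ x ∈ p.support, x ∉ q.support := by
    intro x hxp hxq
    have hα : (p.takeUntil x hxp).length = T.dist w x :=
      tree_path_length hT _ (hp.takeUntil hxp)
    have hβ : (p.dropUntil x hxp).length = T.dist x a :=
      tree_path_length hT _ (hp.dropUntil hxp)
    have hαβ := congrArg Walk.length (p.take_spec hxp)
    rw [Walk.length_append] at hαβ
    have hγ : (q.takeUntil x hxq).length = T.dist b x :=
      tree_path_length hT _ (hq.takeUntil hxq)
    have hδ : (q.dropUntil x hxq).length = T.dist x z :=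
      tree_path_length hT _ (hq.dropUntil hxq)
    have hγδ := congrArg Walk.length (q.take_spec hxq)
    rw [Walk.length_append] at hγδ
    have t1 : T.dist w b ≤ T.dist w x + T.dist x b :=
      hT.isConnected.dist_triangle
    have t2 : T.dist z a ≤ T.dist z x + T.dist x a :=
      hT.isConnected.dist_triangle
    rw [T.dist_comm (u := x) (v := b)] at t1
    rw [T.dist_comm (u := z) (v := x)] at t2
    have e1 : T.dist w x + T.dist x a = T.dist w a := by omega
    have e2 : T.dist b x + T.dist x z = T.dist b z := by omega
    have e3 : T.dist z b = T.dist b z := SimpleGraph.dist_comm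
    omega
  have hW : (p.append (Walk.cons hab q)).IsPath := by
    rw [Walk.isPath_def, Walk.support_append, Walk.support_cons, List.tail_cons]
    exact List.Nodup.append hp.support_nodup hq.support_nodup hdisj
  have := tree_path_length hT _ hW
  rw [Walk.length_append, Walk.length_cons] at this
  omega




lemma exists_penult (hT : T.IsTree) {u v : V} (hne : u ≠ v) :
    ∃ s, T.Adj s v ∧ T.dist u s + 1 = T.dist u v := by
  obtain ⟨p, hp, hpl⟩ := hT.isConnected.exists_path_of_dist u v
  obtain ⟨s, h, q, hq⟩ := Walk.exists_eq_cons_of_ne hne.symm p.reverse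
  have hqp : q.IsPath := by
    have := hp.reverse
    rw [hq] at this
    exact this.of_cons
  have hlen : q.reverse.length = T.dist u s := tree_path_length hT _ hqp.reverse
  have h2 : p.reverse.length = q.length + 1 := by rw [hq, Walk.length_cons]
  rw [Walk.length_reverse] at h2 hlen
  exact ⟨s, h.symm, by omega⟩

lemma tree_dist_step (hT : T.IsTree) {a b : V} (hab : T.Adj a b) (w : V) :
    T.dist w b = T.dist w a + 1 ∨ T.dist w a = T.dist w b + 1 := by
  obtain ⟨q, hq, hql⟩ := hT.isConnected.exists_path_of_dist w b
  by_cases ha : a ∈ q.support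
  · left
    have h1 : (q.takeUntil a ha).length = T.dist w a :=
      tree_path_length hT _ (hq.takeUntil ha)
    have h2 : (q.dropUntil a ha).length = T.dist a b :=
      tree_path_length hT _ (hq.dropUntil ha)
    have h3 := congrArg Walk.length (q.take_spec ha)
    rw [Walk.length_append] at h3
    have h4 : T.dist a b = 1 := dist_eq_one_iff_adj.2 hab
    omega
  · right
    have hpath : (q.concat hab.symm).IsPath := by
      rw [Walk.isPath_def, Walk.support_concat]
      refine List.Nodup.append hq.support_nodup (List.nodup_singleton a) ?_
      intro x hx hx'
      simp only [List.mem_singleton] at hx'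
      exact ha (hx' ▸ hx)
    have h1 : (q.concat hab.symm).length = T.dist w a := tree_path_length hT _ hpath
    rw [Walk.length_concat] at h1
    omega

lemma tree_side (hT : T.IsTree) {a b : V} (hab : T.Adj a b) (w : V) :
    T.dist w a < T.dist w b ∨ T.dist w b < T.dist w a := by
  rcases tree_dist_step hT hab w with h | h <;> omega

lemma dpos (hT : T.IsTree) {u v : V} (h : u ≠ v) : 0 < T.dist u v :=
  hT.isConnected.pos_dist_of_ne h

lemma adj_dist_one {a b : V} (hab : T.Adj a b) : T.dist a b = 1 :=
  dist_eq_one_iff_adj.2 hab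

lemma side_of_other (hT : T.IsTree) {a b a' : V} (hab : T.Adj a b)
    (h : T.Adj a a') (hne : a' ≠ b) : T.dist a' a < T.dist a' b ∧ T.dist a' b = 2 := by
  have h1 : T.dist a' a = 1 := adj_dist_one h.symm
  have h2 := tree_dist_step hT hab a'
  have h3 : T.dist a' b ≠ 0 := fun hh => hne (hT.isConnected.dist_eq_zero_iff.mp hh)
  omega

lemma exists_other_neighbor {a : V} (h : 2 ≤ T.degree a) (b : V) :
    ∃ a', T.Adj a a' ∧ a' ≠ b := by
  have : 1 < (T.neighborFinset a).card := h
  obtain ⟨a', ha', hne⟩ := Finset.exists_mem_ne this b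
  exact ⟨a', (T.mem_neighborFinset a a').mp ha', hne⟩

lemma aux_config (hT : T.IsTree) (hdiam : ∀ u v : V, T.dist u v ≤ 4)
    {a b x y : V} (hab : T.Adj a b) (hxy : T.Adj x y) (hbx : b ≠ x)
    (hxside : T.dist x b < T.dist x a) (hyside : T.dist y b < T.dist y a)
    (haside : T.dist a x < T.dist a y) (hbside : T.dist b x < T.dist b y)
    (ha2 : 2 ≤ T.degree a) (hy2 : 2 ≤ T.degree y) : False := by
  obtain ⟨a', haa', ha'b⟩ := exists_other_neighbor ha2 b
  obtain ⟨y', hyy', hy'x⟩ := exists_other_neighbor hy2 x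
  obtain ⟨ha'side, -⟩ := side_of_other hT hab haa' ha'b
  obtain ⟨hy'side, -⟩ := side_of_other hT hxy.symm hyy' hy'x
  have hyy1 : T.dist y y' = 1 := adj_dist_one hyy'
  -- dist b y' through edge xy
  have h1 : T.dist b y' = T.dist b x + 1 + T.dist y y' := tree_split hT hxy hbside hy'side
  -- dist a y' through edge xy
  have h2 : T.dist a y' = T.dist a x + 1 + T.dist y y' := tree_split hT hxy haside hy'side
  -- dist a x through edge ab
  have h3 : T.dist a x = T.dist a a + 1 + T.dist b x := by
    refine tree_split hT hab ?_ hxside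
    rw [T.dist_self, adj_dist_one hab]
    omega
  have h4 : T.dist a a = 0 := T.dist_self
  -- y' is on b's side of ab
  have h5 : T.dist y' b = T.dist b y' := SimpleGraph.dist_comm
  have h6 : T.dist y' a = T.dist a y' := SimpleGraph.dist_comm
  have hy'ab : T.dist y' b < T.dist y' a := by omega
  have h7 : T.dist a' y' = T.dist a' a + 1 + T.dist b y' := tree_split hT hab ha'side hy'ab
  have h8 : T.dist a' a = 1 := adj_dist_one haa'.symm
  have h9 : 0 < T.dist b x := dpos hT hbx
  have := hdiam a' y'
  omega

lemma no_two_internal_aux2 (hT : T.IsTree) (hdiam : ∀ u v : V, T.dist u v ≤ 4)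
    {a b x y : V} (hab : T.Adj a b) (hxy : T.Adj x y)
    (hax : a ≠ x) (hay : a ≠ y) (hbx : b ≠ x) (hby : b ≠ y)
    (ha2 : 2 ≤ T.degree a) (hx2 : 2 ≤ T.degree x) (hy2 : 2 ≤ T.degree y)
    (hx : T.dist x b < T.dist x a) (hy : T.dist y b < T.dist y a) : False := by
  rcases tree_side hT hxy a with ha | ha
  · -- a on x's side of xy; show b is too
    have hb : T.dist b x < T.dist b y := by
      rcases tree_side hT hxy b with hb | hb
      · exact hb
      · exfalso
        have h1 : T.dist a b = T.dist a x + 1 + T.dist y b := tree_split hT hxy ha hb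
        have h2 : 0 < T.dist a x := dpos hT hax
        have h3 : 0 < T.dist y b := dpos hT (Ne.symm hby)
        have h4 : T.dist a b = 1 := adj_dist_one hab
        omega
    exact aux_config hT hdiam hab hxy hbx hx hy ha hb ha2 hy2
  · -- a on y's side of xy; show b is too
    have hb : T.dist b y < T.dist b x := by
      rcases tree_side hT hxy.symm b with hb | hb
      · exact hb
      · exfalso
        have h1 : T.dist b a = T.dist b x + 1 + T.dist y a := tree_split hT hxy hb ha
        have h2 : 0 < T.dist b x := dpos hT hbx
        have h3 : 0 < T.dist y a := dpos hT (Ne.symm hay)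
        have h4 : T.dist b a = 1 := adj_dist_one hab.symm
        omega
    exact aux_config hT hdiam hab hxy.symm hby hy hx ha hb ha2 hx2

lemma no_two_internal (hT : T.IsTree) (hdiam : ∀ u v : V, T.dist u v ≤ 4)
    {a b x y : V} (hab : T.Adj a b) (hxy : T.Adj x y)
    (hax : a ≠ x) (hay : a ≠ y) (hbx : b ≠ x) (hby : b ≠ y)
    (ha2 : 2 ≤ T.degree a) (hb2 : 2 ≤ T.degree b)
    (hx2 : 2 ≤ T.degree x) (hy2 : 2 ≤ T.degree y) : False := by
  rcases tree_side hT hab x with hx | hx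
  · -- x on a's side of ab; show y is too
    have hy : T.dist y a < T.dist y b := by
      rcases tree_side hT hab y with hy | hy
      · exact hy
      · exfalso
        have h1 : T.dist x y = T.dist x a + 1 + T.dist b y := tree_split hT hab hx hy
        have h2 : 0 < T.dist x a := dpos hT (Ne.symm hax)
        have h3 : 0 < T.dist b y := dpos hT hby
        have h4 : T.dist x y = 1 := adj_dist_one hxy
        omega
    exact no_two_internal_aux2 hT hdiam hab.symm hxy hbx hby hax hay hb2 hx2 hy2 hx hy
  · have hy : T.dist y b < T.dist y a := by
      rcases tree_side hT hab.symm y with hy | hy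
      · exact hy
      · exfalso
        have h1 : T.dist x y = T.dist x b + 1 + T.dist a y := tree_split hT hab.symm hx hy
        have h2 : 0 < T.dist x b := dpos hT (Ne.symm hbx)
        have h3 : 0 < T.dist a y := dpos hT hay
        have h4 : T.dist x y = 1 := adj_dist_one hxy
        omega
    exact no_two_internal_aux2 hT hdiam hab hxy hax hay hbx hby ha2 hx2 hy2 hx hy

lemma tree_dist_ne (hT : T.IsTree) {a b : V} (hab : T.Adj a b) (w : V) :
    T.dist w a ≠ T.dist w b := by
  rcases tree_dist_step hT hab w with h | h <;> omega

lemma no_triangle (hT : T.IsTree) {u v w : V} (h1 : T.Adj u v) (h2 : T.Adj v w)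
    (h3 : T.Adj u w) : False := by
  have := tree_dist_ne hT h1 w
  rw [adj_dist_one h3.symm, adj_dist_one h2.symm] at this
  exact this rfl

lemma internal_common (hT : T.IsTree) (hdiam : ∀ u v : V, T.dist u v ≤ 4) [Nonempty V] :
    ∃ cc : V, ∀ u v, T.Adj u v → 2 ≤ T.degree u → 2 ≤ T.degree v → u = cc ∨ v = cc := by
  by_cases h : ∃ a b, T.Adj a b ∧ 2 ≤ T.degree a ∧ 2 ≤ T.degree b
  · obtain ⟨a, b, hab, ha2, hb2⟩ := h
    by_cases hall : ∀ u v, T.Adj u v → 2 ≤ T.degree u → 2 ≤ T.degree v → u = a ∨ v = a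
    · exact ⟨a, hall⟩
    · push_neg at hall
      obtain ⟨x, y, hxy, hx2, hy2, hxa, hya⟩ := hall
      refine ⟨b, fun u v huv hu2 hv2 => ?_⟩
      by_contra hc
      push_neg at hc
      obtain ⟨hub, hvb⟩ := hc
      have h1 : u = a ∨ v = a := by
        by_contra h1
        push_neg at h1
        exact no_two_internal hT hdiam hab huv (Ne.symm h1.1) (Ne.symm h1.2)
          (Ne.symm hub) (Ne.symm hvb) ha2 hb2 hu2 hv2
      have h2 : b = x ∨ b = y := by
        by_contra h2
        push_neg at h2
        exact no_two_internal hT hdiam hab hxy (Ne.symm hxa) (Ne.symm hya)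
          h2.1 h2.2 ha2 hb2 hx2 hy2
      have h3 : x = u ∨ x = v ∨ y = u ∨ y = v := by
        by_contra h3
        push_neg at h3
        exact no_two_internal hT hdiam hxy huv h3.1 h3.2.1 h3.2.2.1 h3.2.2.2
          hx2 hy2 hu2 hv2
      -- in every case we get a triangle
      rcases h1 with rfl | rfl
      · -- u = a
        have hvxy : v = x ∨ v = y := by
          rcases h3 with h | h | h | h
          · exact absurd h hxa
          · exact Or.inl h.symm
          · exact absurd h hya
          · exact Or.inr h.symm
        have hvbadj : T.Adj v b := by
          rcases hvxy with rfl | rfl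
          · rcases h2 with rfl | rfl
            · exact absurd rfl hvb
            · exact hxy
          · rcases h2 with rfl | rfl
            · exact hxy.symm
            · exact absurd rfl hvb
        exact no_triangle hT huv hvbadj hab
      · -- v = a
        have huxy : u = x ∨ u = y := by
          rcases h3 with h | h | h | h
          · exact Or.inl h.symm
          · exact absurd h hxa
          · exact Or.inr h.symm
          · exact absurd h hya
        have hubadj : T.Adj u b := by
          rcases huxy with rfl | rfl
          · rcases h2 with rfl | rfl
            · exact absurd rfl hub
            · exact hxy
          · rcases h2 with rfl | rfl
            · exact hxy.symm
            · exact absurd rfl hub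
        exact no_triangle hT huv.symm hubadj hab
  · exact ⟨Classical.arbitrary V, fun u v huv hu hv => absurd ⟨u, v, huv, hu, hv⟩ h⟩

lemma deg_one_unique {u v w : V} (hdeg : T.degree u = 1) (huv : T.Adj u v)
    (huw : T.Adj u w) : w = v := by
  obtain ⟨a, ha⟩ := Finset.card_eq_one.mp (hdeg : (T.neighborFinset u).card = 1)
  have h1 : v ∈ T.neighborFinset u := (T.mem_neighborFinset u v).mpr huv
  have h2 : w ∈ T.neighborFinset u := (T.mem_neighborFinset u w).mpr huw
  rw [ha, Finset.mem_singleton] at h1 h2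
  rw [h1, h2]

lemma leaf_dist (hT : T.IsTree) {u v : V} (hdeg : T.degree u = 1) (huv : T.Adj u v)
    {w : V} (hw : w ≠ u) : T.dist w u = T.dist w v + 1 := by
  obtain ⟨s, hsu, hd⟩ := exists_penult hT hw
  have : s = v := deg_one_unique hdeg huv hsu.symm
  rw [this] at hd
  omega

lemma adj_cc (hT : T.IsTree) {cc : V}
    (hcc : ∀ u v, T.Adj u v → 2 ≤ T.degree u → 2 ≤ T.degree v → u = cc ∨ v = cc)
    {u v : V} (huv : T.Adj u v) (hu : u ≠ cc) (hv : v ≠ cc)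
    (hdeg : T.degree u = 1) : T.Adj cc v := by
  have hdu : T.dist cc u = T.dist cc v + 1 := leaf_dist hT hdeg huv (Ne.symm hu)
  have hne : cc ≠ v := Ne.symm hv
  have hpos : 0 < T.dist cc v := dpos hT hne
  by_contra hadj
  have hd2 : 2 ≤ T.dist cc v := by
    have : T.dist cc v ≠ 1 := fun h => hadj (dist_eq_one_iff_adj.mp h)
    omega
  obtain ⟨s, hsv, hds⟩ := exists_penult hT hne
  have hsu : s ≠ u := by
    intro h
    rw [h, hdu] at hds
    omega
  have hscc : s ≠ cc := by
    intro h
    rw [h, T.dist_self] at hds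
    omega
  have hdv : 2 ≤ T.degree v := by
    rw [← T.card_neighborFinset_eq_degree]
    refine Finset.one_lt_card.mpr ⟨u, ?_, s, ?_, Ne.symm hsu⟩
    · exact (T.mem_neighborFinset v u).mpr huv.symm
    · exact (T.mem_neighborFinset v s).mpr hsv.symm
  have hds2 : 2 ≤ T.degree s := by
    by_cases h1 : T.Adj cc s
    · rw [← T.card_neighborFinset_eq_degree]
      refine Finset.one_lt_card.mpr ⟨v, ?_, cc, ?_, Ne.symm hne⟩
      · exact (T.mem_neighborFinset s v).mpr hsv
      · exact (T.mem_neighborFinset s cc).mpr h1.symm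
    · have hpos' : 0 < T.dist cc s := dpos hT (Ne.symm hscc)
      have hne1 : T.dist cc s ≠ 1 := fun h => h1 (dist_eq_one_iff_adj.mp h)
      obtain ⟨t, hts, hdt⟩ := exists_penult hT (Ne.symm hscc)
      have htv : t ≠ v := by
        intro h
        rw [h] at hdt
        omega
      rw [← T.card_neighborFinset_eq_degree]
      refine Finset.one_lt_card.mpr ⟨v, ?_, t, ?_, Ne.symm htv⟩
      · exact (T.mem_neighborFinset s v).mpr hsv
      · exact (T.mem_neighborFinset s t).mpr hts.symm
  rcases hcc s v hsv hds2 hdv with rfl | rfl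
  · exact hscc rfl
  · exact hv rfl

lemma cc_struct (hT : T.IsTree) {cc : V}
    (hcc : ∀ u v, T.Adj u v → 2 ≤ T.degree u → 2 ≤ T.degree v → u = cc ∨ v = cc)
    {u v : V} (huv : T.Adj u v) (hu : u ≠ cc) (hv : v ≠ cc) :
    (T.degree u = 1 ∧ T.Adj cc v) ∨ (T.degree v = 1 ∧ T.Adj cc u) := by
  have hdu1 : 1 ≤ T.degree u := (T.degree_pos_iff_exists_adj u).mpr ⟨v, huv⟩
  by_cases h1 : T.degree u = 1
  · exact Or.inl ⟨h1, adj_cc hT hcc huv hu hv h1⟩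
  · have hu2 : 2 ≤ T.degree u := by omega
    have hv1 : T.degree v = 1 := by
      by_contra h2
      have hdv1 : 1 ≤ T.degree v := (T.degree_pos_iff_exists_adj v).mpr ⟨u, huv.symm⟩
      have hv2 : 2 ≤ T.degree v := by omega
      rcases hcc u v huv hu2 hv2 with rfl | rfl
      · exact hu rfl
      · exact hv rfl
    exact Or.inr ⟨hv1, adj_cc hT hcc huv.symm hv hu hv1⟩

section RankMod

def rk (ι : V → ℕ) (s : Finset V) (v : V) : ℕ := (s.filter fun w => ι w < ι v).card

lemma rk_lt (ι : V → ℕ) {s : Finset V} {v : V} (h : v ∈ s) : rk ι s v < s.card := by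
  apply Finset.card_lt_card
  constructor
  · exact Finset.filter_subset _ s
  · intro hsub
    have := hsub h
    simp only [Finset.mem_filter] at this
    omega

lemma rk_lt_of_lt (ι : V → ℕ) {s : Finset V} {v w : V} (hv : v ∈ s) (h : ι v < ι w) :
    rk ι s v < rk ι s w := by
  apply Finset.card_lt_card
  constructor
  · intro x hx
    simp only [Finset.mem_filter] at hx ⊢
    exact ⟨hx.1, hx.2.trans h⟩
  · intro hsub
    have hv' : v ∈ s.filter fun x => ι x < ι w := by
      simp only [Finset.mem_filter]; exact ⟨hv, h⟩
    have := hsub hv'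
    simp only [Finset.mem_filter] at this
    omega

lemma rk_inj {ι : V → ℕ} (hι : Function.Injective ι) {s : Finset V} {v w : V}
    (hv : v ∈ s) (hw : w ∈ s) (h : rk ι s v = rk ι s w) : v = w := by
  rcases lt_trichotomy (ι v) (ι w) with hlt | heq | hlt
  · exact absurd h (Nat.ne_of_lt (rk_lt_of_lt ι hv hlt))
  · exact hι heq
  · exact absurd h.symm (Nat.ne_of_lt (rk_lt_of_lt ι hw hlt))

lemma mod2 {x D : ℕ} (h : x < 2 * D) : x % D = if x < D then x else x - D := by
  split_ifs with h1
  · exact Nat.mod_eq_of_lt h1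
  · rw [Nat.mod_eq_sub_mod (by omega)]
    exact Nat.mod_eq_of_lt (by omega)

lemma mod_shift_inj {D s1 s2 c : ℕ} (h1 : s1 < D) (h2 : s2 < D)
    (h : (c + s1) % D = (c + s2) % D) : s1 = s2 := by
  have hD : 0 < D := by omega
  have hc : c % D < D := Nat.mod_lt _ hD
  have e1 : (c + s1) % D = (c % D + s1) % D := by
    conv_lhs => rw [Nat.add_mod, Nat.mod_eq_of_lt h1]
  have e2 : (c + s2) % D = (c % D + s2) % D := by
    conv_lhs => rw [Nat.add_mod, Nat.mod_eq_of_lt h2]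
  have m1 := mod2 (x := c % D + s1) (D := D) (by omega)
  have m2 := mod2 (x := c % D + s2) (D := D) (by omega)
  rw [e1, m1, e2, m2] at h
  split_ifs at h <;> omega

lemma mod_shift_ne {D s c : ℕ} (h1 : 0 < s) (h2 : s < D) : (c + s) % D ≠ c % D := by
  intro h
  have : (c + s) % D = (c + 0) % D := by rwa [Nat.add_zero]
  have := mod_shift_inj h2 (by omega) this
  omega

end RankMod

section Coloring

variable (T)

def aCol (cc : V) (ι : V → ℕ) : V → ℕ := rk ι (T.neighborFinset cc)

def pCol (cc : V) (ι : V → ℕ) (D : ℕ) (v u : V) : ℕ :=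
  (aCol T cc ι v + 1 + rk ι ((T.neighborFinset v).erase cc) u) % D

def fCol (cc : V) (ι : V → ℕ) (D : ℕ) (x y : V) : ℕ :=
  if x = cc then aCol T cc ι y
  else if y = cc then aCol T cc ι x
  else if T.Adj cc x ∧ T.Adj cc y then 0
  else if T.Adj cc x then pCol T cc ι D x y
  else if T.Adj cc y then pCol T cc ι D y x
  else 0

lemma fCol_symm (cc : V) (ι : V → ℕ) (D : ℕ) (x y : V) :
    fCol T cc ι D x y = fCol T cc ι D y x := by
  unfold fCol
  by_cases hx : x = cc <;> by_cases hy : y = cc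
  · subst hx; subst hy; simp
  · simp [hx, hy]
  · simp [hx, hy]
  · by_cases hax : T.Adj cc x <;> by_cases hay : T.Adj cc y <;>
      simp [hx, hy, hax, hay]

def colF (cc : V) (ι : V → ℕ) (D : ℕ) : Sym2 V → ℕ :=
  Sym2.lift ⟨fCol T cc ι D, fCol_symm T cc ι D⟩

@[simp] lemma colF_mk (cc : V) (ι : V → ℕ) (D : ℕ) (x y : V) :
    colF T cc ι D s(x, y) = fCol T cc ι D x y := rfl

end Coloring

section ColorLemmas

variable {cc : V} {ι : V → ℕ}

lemma colF_cc_left (v : V) : fCol T cc ι D cc v = aCol T cc ι v := by simp [fCol]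

lemma colF_cc_right {u : V} (hu : u ≠ cc) : fCol T cc ι D u cc = aCol T cc ι u := by
  simp [fCol, hu]

lemma colF_pend {v u : V} (hv : v ≠ cc) (hu : u ≠ cc) (hav : T.Adj cc v)
    (hau : ¬T.Adj cc u) : fCol T cc ι D v u = pCol T cc ι D v u := by
  simp [fCol, hv, hu, hav, hau]

lemma aCol_lt {v : V} (hadj : T.Adj cc v) : aCol T cc ι v < T.maxDegree := by
  have h1 : v ∈ T.neighborFinset cc := (T.mem_neighborFinset cc v).mpr hadj
  have h2 := rk_lt ι h1
  rw [T.card_neighborFinset_eq_degree] at h2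
  exact lt_of_lt_of_le h2 (T.degree_le_maxDegree cc)

lemma shift_bound {u x : V} (hux : T.Adj u x) (hx : x ≠ cc) (hadj : T.Adj cc u) :
    x ∈ (T.neighborFinset u).erase cc ∧
      1 + rk ι ((T.neighborFinset u).erase cc) x < T.maxDegree := by
  have hmem : x ∈ (T.neighborFinset u).erase cc :=
    Finset.mem_erase.mpr ⟨hx, (T.mem_neighborFinset u x).mpr hux⟩
  have hccm : cc ∈ T.neighborFinset u := (T.mem_neighborFinset u cc).mpr hadj.symm
  have hcard : ((T.neighborFinset u).erase cc).card = T.degree u - 1 := by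
    rw [Finset.card_erase_of_mem hccm, T.card_neighborFinset_eq_degree]
  have hr := rk_lt ι hmem
  rw [hcard] at hr
  have hdle := T.degree_le_maxDegree u
  exact ⟨hmem, by omega⟩

lemma pCol_eq_shift (v u : V) :
    pCol T cc ι D v u =
      (aCol T cc ι v + (1 + rk ι ((T.neighborFinset v).erase cc) u)) % D := by
  rw [pCol, Nat.add_assoc]

lemma edge_type (hT : T.IsTree)
    (hcc : ∀ u v, T.Adj u v → 2 ≤ T.degree u → 2 ≤ T.degree v → u = cc ∨ v = cc)
    {u v : V} (huv : T.Adj u v) (hu : u ≠ cc) (hv : v ≠ cc) :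
    (T.degree u = 1 ∧ T.Adj cc v ∧ ¬T.Adj cc u) ∨
      (T.degree v = 1 ∧ T.Adj cc u ∧ ¬T.Adj cc v) := by
  rcases cc_struct hT hcc huv hu hv with ⟨h1, h2⟩ | ⟨h1, h2⟩
  · exact Or.inl ⟨h1, h2, fun hadj => hv (deg_one_unique h1 huv hadj.symm).symm⟩
  · exact Or.inr ⟨h1, h2, fun hadj => hu (deg_one_unique h1 huv.symm hadj.symm).symm⟩

lemma col_proper (hT : T.IsTree)
    (hcc : ∀ u v, T.Adj u v → 2 ≤ T.degree u → 2 ≤ T.degree v → u = cc ∨ v = cc)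
    (hι : Function.Injective ι)
    {u v w : V} (huv : T.Adj u v) (huw : T.Adj u w) (hvw : v ≠ w) :
    colF T cc ι T.maxDegree s(u, v) ≠ colF T cc ι T.maxDegree s(u, w) := by
  rw [colF_mk, colF_mk]
  by_cases hu : u = cc
  · rw [hu] at huv huw ⊢
    rw [colF_cc_left, colF_cc_left]
    intro h
    exact hvw (rk_inj hι ((T.mem_neighborFinset cc v).mpr huv)
      ((T.mem_neighborFinset cc w).mpr huw) h)
  by_cases hv : v = cc
  · rw [hv] at huv ⊢
    have hw : w ≠ cc := fun h => hvw (hv.trans h.symm)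
    rw [colF_cc_right hu]
    rcases edge_type hT hcc huw hu hw with ⟨h1, h2, h3⟩ | ⟨h1, h2, h3⟩
    · exact absurd huv.symm h3
    · rw [colF_pend hu hw h2 h3, pCol_eq_shift]
      obtain ⟨hmem, hlt⟩ := shift_bound (ι := ι) huw hw h2
      have hau : aCol T cc ι u < T.maxDegree := aCol_lt h2
      intro h
      exact mod_shift_ne (by omega) hlt (by rw [← h, Nat.mod_eq_of_lt hau])
  by_cases hw : w = cc
  · rw [hw] at huw ⊢
    rw [colF_cc_right hu]
    rcases edge_type hT hcc huv hu hv with ⟨h1, h2, h3⟩ | ⟨h1, h2, h3⟩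
    · exact absurd huw.symm h3
    · rw [colF_pend hu hv h2 h3, pCol_eq_shift]
      obtain ⟨hmem, hlt⟩ := shift_bound (ι := ι) huv hv h2
      have hau : aCol T cc ι u < T.maxDegree := aCol_lt h2
      intro h
      exact mod_shift_ne (by omega) hlt (by rw [h, Nat.mod_eq_of_lt hau])
  · rcases edge_type hT hcc huv hu hv with ⟨h1, h2, h3⟩ | ⟨h1, h2, h3⟩
    · exact absurd (deg_one_unique h1 huv huw) (Ne.symm hvw)
    · rcases edge_type hT hcc huw hu hw with ⟨g1, g2, g3⟩ | ⟨g1, g2, g3⟩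
      · exact absurd h2 g3
      · rw [colF_pend hu hv h2 h3, colF_pend hu hw g2 g3, pCol_eq_shift, pCol_eq_shift]
        obtain ⟨hmem1, hlt1⟩ := shift_bound (ι := ι) huv hv h2
        obtain ⟨hmem2, hlt2⟩ := shift_bound (ι := ι) huw hw g2
        intro h
        have := mod_shift_inj hlt1 hlt2 h
        have hrk : rk ι ((T.neighborFinset u).erase cc) v =
            rk ι ((T.neighborFinset u).erase cc) w := by omega
        exact hvw (rk_inj hι hmem1 hmem2 hrk)

lemma col_lt (hT : T.IsTree)
    (hcc : ∀ u v, T.Adj u v → 2 ≤ T.degree u → 2 ≤ T.degree v → u = cc ∨ v = cc)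
    (hΔ : 0 < T.maxDegree) {u v : V} (huv : T.Adj u v) :
    colF T cc ι T.maxDegree s(u, v) < T.maxDegree := by
  rw [colF_mk]
  by_cases hu : u = cc
  · rw [hu] at huv ⊢; rw [colF_cc_left]; exact aCol_lt huv
  by_cases hv : v = cc
  · rw [hv] at huv ⊢; rw [colF_cc_right hu]; exact aCol_lt huv.symm
  rcases edge_type hT hcc huv hu hv with ⟨h1, h2, h3⟩ | ⟨h1, h2, h3⟩
  · rw [fCol_symm, colF_pend hv hu h2 h3]
    exact Nat.mod_lt _ hΔ
  · rw [colF_pend hu hv h2 h3]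
    exact Nat.mod_lt _ hΔ

end ColorLemmas

lemma tree_upper (hT : T.IsTree) (hE : T.edgeSet.Nonempty)
    (hdiam : ∀ u v : V, T.dist u v ≤ 4) :
    HasSemistrongEdgeColoring T T.maxDegree := by
  classical
  obtain ⟨e0, he0⟩ := hE
  obtain ⟨u0, v0, he0'⟩ : ∃ u v : V, T.Adj u v := by
    revert he0
    refine Sym2.ind (fun u v h => ⟨u, v, T.mem_edgeSet.mp h⟩) e0
  have hV : Nonempty V := ⟨u0⟩
  have hΔ : 0 < T.maxDegree :=
    lt_of_lt_of_le ((T.degree_pos_iff_exists_adj u0).mpr ⟨v0, he0'⟩)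
      (T.degree_le_maxDegree u0)
  obtain ⟨cc, hcc⟩ := internal_common hT hdiam
  set ι : V → ℕ := fun v => ((Fintype.equivFin V) v : ℕ) with hι_def
  have hι : Function.Injective ι := by
    intro x y h
    exact (Fintype.equivFin V).injective (Fin.val_injective h)
  refine ⟨colF T cc ι T.maxDegree, ?_, ?_⟩
  · intro e
    refine Sym2.ind (fun x y h => ?_) e
    exact col_lt hT hcc hΔ (T.mem_edgeSet.mp h)
  · intro i
    set M := {e | e ∈ T.edgeSet ∧ colF T cc ι T.maxDegree e = i} with hM
    have hmatch : IsMatchingSet T M := by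
      constructor
      · intro e he
        exact he.1
      · intro e he f hf hef x hxe hxf
        obtain ⟨y, rfl⟩ := Sym2.mem_iff_exists.mp hxe
        obtain ⟨z, rfl⟩ := Sym2.mem_iff_exists.mp hxf
        have hxy : T.Adj x y := T.mem_edgeSet.mp he.1
        have hxz : T.Adj x z := T.mem_edgeSet.mp hf.1
        have hyz : y ≠ z := fun h => hef (by rw [h])
        exact col_proper hT hcc hι hxy hxz hyz (he.2.trans hf.2.symm)
    refine ⟨hmatch, ?_⟩
    have key : ∀ v : V, T.Adj cc v → 2 ≤ T.degree v → s(cc, v) ∈ M →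
        ∀ w ∈ edgeVerts M, T.Adj v w → w = cc := by
      intro v hccv hv2 heM w hw hadj
      by_contra hwcc
      simp only [edgeVerts, Set.mem_setOf_eq] at hw
      obtain ⟨f, hfM, hwf⟩ := hw
      obtain ⟨t, rfl⟩ := Sym2.mem_iff_exists.mp hwf
      have hwt : T.Adj w t := T.mem_edgeSet.mp hfM.1
      have hfe : s(w, t) ≠ s(cc, v) := by
        intro h
        have : w ∈ s(cc, v) := h ▸ Sym2.mem_mk_left w t
        rcases Sym2.mem_iff.mp this with h' | h'
        · exact hwcc h'
        · exact T.irrefl (h' ▸ hadj)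
      have hmm := hmatch.2 _ heM _ hfM (Ne.symm hfe)
      have hvnf : v ∉ s(w, t) := hmm v (Sym2.mem_mk_right cc v)
      have htv : t ≠ v := fun h => hvnf (h ▸ Sym2.mem_mk_right w t)
      have hw2 : 2 ≤ T.degree w := by
        rw [← T.card_neighborFinset_eq_degree]
        refine Finset.one_lt_card.mpr ⟨v, ?_, t, ?_, Ne.symm htv⟩
        · exact (T.mem_neighborFinset w v).mpr hadj.symm
        · exact (T.mem_neighborFinset w t).mpr hwt
      rcases hcc v w hadj hv2 hw2 with h' | h'
      · exact hccv.ne' h'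
      · exact hwcc h'
    intro e
    refine Sym2.ind (fun x y he => ?_) e
    have hxy : T.Adj x y := T.mem_edgeSet.mp he.1
    by_cases hx1 : T.degree x = 1
    · exact ⟨x, y, rfl, fun w _ hadj => deg_one_unique hx1 hxy hadj⟩
    by_cases hy1 : T.degree y = 1
    · exact ⟨y, x, Sym2.eq_swap, fun w _ hadj => deg_one_unique hy1 hxy.symm hadj⟩
    have hx2 : 2 ≤ T.degree x := by
      have := (T.degree_pos_iff_exists_adj x).mpr ⟨y, hxy⟩
      omega
    have hy2 : 2 ≤ T.degree y := by
      have := (T.degree_pos_iff_exists_adj y).mpr ⟨x, hxy.symm⟩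
      omega
    rcases hcc x y hxy hx2 hy2 with hx | hy
    · -- x = cc
      have he' : s(cc, y) ∈ M := by rw [← hx]; exact he
      have hccy : T.Adj cc y := hx ▸ hxy
      refine ⟨y, cc, ?_, key y hccy hy2 he'⟩
      rw [hx]
      exact Sym2.eq_swap
    · -- y = cc
      have he' : s(cc, x) ∈ M := by
        rw [← hy]
        exact Sym2.eq_swap ▸ he
      have hccx : T.Adj cc x := hy ▸ hxy.symm
      refine ⟨x, cc, ?_, key x hccx hx2 he'⟩
      rw [hy]

lemma tree_lower (hE : T.edgeSet.Nonempty) {k : ℕ}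
    (h : HasSemistrongEdgeColoring T k) : T.maxDegree ≤ k := by
  classical
  obtain ⟨c, hlt, hss⟩ := h
  obtain ⟨e0, he0⟩ := hE
  obtain ⟨u0, v0, he0'⟩ : ∃ u v : V, T.Adj u v := by
    revert he0
    refine Sym2.ind (fun u v h => ⟨u, v, T.mem_edgeSet.mp h⟩) e0
  have hV : Nonempty V := ⟨u0⟩
  obtain ⟨v, hv⟩ := T.exists_maximal_degree_vertex
  rw [hv, ← T.card_incidenceFinset_eq_degree]
  have hcard : (T.incidenceFinset v).card ≤ (Finset.range k).card := by
    apply Finset.card_le_card_of_injOn c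
    · intro e he
      rw [Finset.mem_coe, Finset.mem_range]
      have := (SimpleGraph.mem_incidenceFinset (G := T) (v := v) e).mp he
      exact hlt e (T.incidenceSet_subset v this)
    · intro e he f hf hcef
      by_contra hef
      have he' := (SimpleGraph.mem_incidenceFinset (G := T) (v := v) e).mp he
      have hf' := (SimpleGraph.mem_incidenceFinset (G := T) (v := v) f).mp hf
      have heM : e ∈ {e | e ∈ T.edgeSet ∧ c e = c e} := ⟨T.incidenceSet_subset v he', rfl⟩
      have hfM : f ∈ {e' | e' ∈ T.edgeSet ∧ c e' = c e} :=
        ⟨T.incidenceSet_subset v hf', hcef.symm⟩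
      exact (hss (c e)).1.2 e heM f hfM hef v he'.2 hf'.2
  simpa using hcard


end Aux

/-- For every finite tree `T` with at least one edge and diameter at most `4`,
the semistrong chromatic index of `T` equals `Δ(T)`. -/
theorem ssChromIdx_tree_small_diam {V : Type*} [Fintype V] [DecidableEq V]
    (T : SimpleGraph V) [DecidableRel T.Adj] (hT : T.IsTree)
    (hE : T.edgeSet.Nonempty) (hdiam : ∀ u v : V, T.dist u v ≤ 4) :
    ssChromIdx T = T.maxDegree := by
  have hup := tree_upper hT hE hdiam
  refine le_antisymm (Nat.sInf_le hup) (le_csInf ⟨_, hup⟩ fun k hk => tree_lower hE hk)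
end

section
/- For the path P_6 on 6 vertices (5 edges), the 1-degenerate chromatic index equals 2 while the semistrong chromatic index equals 3; in particular χ'_1(P_6) < χ''_ss(P_6). -/
open SimpleGraph

variable {V : Type*}

/-- `M` is a 1-degenerate matching of `G`: a matching such that the subgraph of
`G` induced by the endvertices of the edges of `M` is acyclic. -/
def IsOneDegenerateMatching (G : SimpleGraph V) (M : Set (Sym2 V)) : Prop :=
  IsMatchingSet G M ∧ (G.induce (edgeVerts M)).IsAcyclic

/-- `G` has a decomposition of its edge set into (at most) `k` 1-degenerate
matchings. -/
def HasOneDegenerateEdgeColoring (G : SimpleGraph V) (k : ℕ) : Prop :=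
  ∃ c : Sym2 V → ℕ, (∀ e ∈ G.edgeSet, c e < k) ∧
    ∀ i : ℕ, IsOneDegenerateMatching G {e | e ∈ G.edgeSet ∧ c e = i}

/-- The 1-degenerate chromatic index `χ'_1(G)`. -/
noncomputable def oneDegChromIdx (G : SimpleGraph V) : ℕ :=
  sInf {k | HasOneDegenerateEdgeColoring G k}


/- ### Auxiliary material -/

instance pg6Dec : DecidableRel (pathGraph 6).Adj := fun _ _ =>
  decidable_of_iff _ pathGraph_adj.symm

instance pg6SdiffDec (e : Sym2 (Fin 6)) :
    DecidableRel (pathGraph 6 \ fromEdgeSet {e}).Adj := fun a b =>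
  decidable_of_iff ((pathGraph 6).Adj a b ∧ ¬(s(a, b) = e ∧ a ≠ b)) (by
    simp [sdiff_adj, fromEdgeSet_adj])

lemma pg6_isAcyclic : (pathGraph 6).IsAcyclic := by
  rw [isAcyclic_iff_forall_adj_isBridge]
  simp only [isBridge_iff]
  decide

lemma IsAcyclic.induce' {G : SimpleGraph V} (h : G.IsAcyclic) (s : Set V) :
    (G.induce s).IsAcyclic := by
  intro v c hc
  exact h (c.map (Embedding.induce (G := G) s).toHom)
    (hc.map (Embedding.induce (G := G) s).injective)

lemma matching_of_empty {G : SimpleGraph V} {M : Set (Sym2 V)} (h : ∀ e, e ∉ M) :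
    IsMatchingSet G M :=
  ⟨fun e he => absurd he (h e), fun e he => absurd he (h e)⟩

def c2 : Sym2 (Fin 6) → ℕ :=
  Sym2.lift ⟨fun i j => (min i.val j.val) % 2, by intros; simp [min_comm]⟩

def c3 : Sym2 (Fin 6) → ℕ :=
  Sym2.lift ⟨fun i j => (min i.val j.val) % 3, by intros; simp [min_comm]⟩

lemma c2_lt : ∀ e : Sym2 (Fin 6), c2 e < 2 := by decide

lemma c3_lt : ∀ e : Sym2 (Fin 6), c3 e < 3 := by decide

lemma hasOneDeg2 : HasOneDegenerateEdgeColoring (pathGraph 6) 2 := by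
  refine ⟨c2, fun e _ => c2_lt e, fun i => ?_⟩
  refine ⟨?_, IsAcyclic.induce' pg6_isAcyclic _⟩
  match i with
  | 0 =>
    constructor
    · simp only [Set.subset_def, Set.mem_setOf_eq]; decide
    · simp only [Set.mem_setOf_eq]; decide
  | 1 =>
    constructor
    · simp only [Set.subset_def, Set.mem_setOf_eq]; decide
    · simp only [Set.mem_setOf_eq]; decide
  | (n + 2) =>
    refine matching_of_empty fun e he => ?_
    have := c2_lt e
    have := he.2
    omega

lemma hasSS3 : HasSemistrongEdgeColoring (pathGraph 6) 3 := by
  refine ⟨c3, fun e _ => c3_lt e, fun i => ?_⟩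
  match i with
  | 0 =>
    constructor
    · constructor
      · simp only [Set.subset_def, Set.mem_setOf_eq]; decide
      · simp only [Set.mem_setOf_eq]; decide
    · unfold edgeVerts
      simp only [Set.mem_setOf_eq]; decide
  | 1 =>
    constructor
    · constructor
      · simp only [Set.subset_def, Set.mem_setOf_eq]; decide
      · simp only [Set.mem_setOf_eq]; decide
    · unfold edgeVerts
      simp only [Set.mem_setOf_eq]; decide
  | 2 =>
    constructor
    · constructor
      · simp only [Set.subset_def, Set.mem_setOf_eq]; decide
      · simp only [Set.mem_setOf_eq]; decide
    · unfold edgeVerts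
      simp only [Set.mem_setOf_eq]; decide
  | (n + 3) =>
    have hemp : ∀ e, e ∉ {e | e ∈ (pathGraph 6).edgeSet ∧ c3 e = n + 3} := by
      intro e he
      have := c3_lt e
      have := he.2
      omega
    exact ⟨matching_of_empty hemp, fun e he => absurd he (hemp e)⟩

lemma e01mem : (s((0 : Fin 6), 1)) ∈ (pathGraph 6).edgeSet := by decide
lemma e12mem : (s((1 : Fin 6), 2)) ∈ (pathGraph 6).edgeSet := by decide
lemma e23mem : (s((2 : Fin 6), 3)) ∈ (pathGraph 6).edgeSet := by decide
lemma e34mem : (s((3 : Fin 6), 4)) ∈ (pathGraph 6).edgeSet := by decide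
lemma e45mem : (s((4 : Fin 6), 5)) ∈ (pathGraph 6).edgeSet := by decide

lemma notOneDeg1 : ¬ HasOneDegenerateEdgeColoring (pathGraph 6) 1 := by
  rintro ⟨c, hlt, hcls⟩
  have h01 := hlt _ e01mem
  have h12 := hlt _ e12mem
  have := (hcls 0).1.2 s((0 : Fin 6), 1) ⟨e01mem, by omega⟩ s((1 : Fin 6), 2)
    ⟨e12mem, by omega⟩ (by decide) 1 (by decide)
  exact this (by decide)

lemma notOneDeg0 : ¬ HasOneDegenerateEdgeColoring (pathGraph 6) 0 := by
  rintro ⟨c, hlt, -⟩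
  exact absurd (hlt _ e01mem) (Nat.not_lt_zero _)

lemma notSS0 : ¬ HasSemistrongEdgeColoring (pathGraph 6) 0 := by
  rintro ⟨c, hlt, -⟩
  exact absurd (hlt _ e01mem) (Nat.not_lt_zero _)

lemma notSS1 : ¬ HasSemistrongEdgeColoring (pathGraph 6) 1 := by
  rintro ⟨c, hlt, hcls⟩
  have h01 := hlt _ e01mem
  have h12 := hlt _ e12mem
  have := (hcls 0).1.2 s((0 : Fin 6), 1) ⟨e01mem, by omega⟩ s((1 : Fin 6), 2)
    ⟨e12mem, by omega⟩ (by decide) 1 (by decide)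
  exact this (by decide)

lemma notSS2 : ¬ HasSemistrongEdgeColoring (pathGraph 6) 2 := by
  rintro ⟨c, hlt, hcls⟩
  -- adjacent edges get distinct colors
  have hne : ∀ a b : Sym2 (Fin 6), a ∈ (pathGraph 6).edgeSet → b ∈ (pathGraph 6).edgeSet →
      a ≠ b → ∀ v : Fin 6, v ∈ a → v ∈ b → c a ≠ c b := by
    intro a b ha hb hab v hva hvb hcc
    exact (hcls (c a)).1.2 a ⟨ha, rfl⟩ b ⟨hb, hcc.symm⟩ hab v hva hvb
  have h01 := hlt _ e01mem
  have h12 := hlt _ e12mem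
  have h23 := hlt _ e23mem
  have h34 := hlt _ e34mem
  have h45 := hlt _ e45mem
  have d1 := hne _ _ e01mem e12mem (by decide) 1 (by decide) (by decide)
  have d2 := hne _ _ e12mem e23mem (by decide) 2 (by decide) (by decide)
  have d3 := hne _ _ e23mem e34mem (by decide) 3 (by decide) (by decide)
  have d4 := hne _ _ e34mem e45mem (by decide) 4 (by decide) (by decide)
  have key01 : c s((0 : Fin 6), 1) = c s((2 : Fin 6), 3) := by omega
  have key45 : c s((4 : Fin 6), 5) = c s((2 : Fin 6), 3) := by omega
  set a := c s((2 : Fin 6), 3) with ha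
  obtain ⟨u, v, huv, hsemi⟩ := (hcls a).2 s((2 : Fin 6), 3) ⟨e23mem, rfl⟩
  rw [Sym2.eq_iff] at huv
  rcases huv with ⟨hu, hv⟩ | ⟨hv, hu⟩
  · -- u = 2, v = 3; vertex 1 is a second neighbor of 2
    have h1v : (1 : Fin 6) ∈ edgeVerts {e | e ∈ (pathGraph 6).edgeSet ∧ c e = a} :=
      ⟨s((0 : Fin 6), 1), ⟨e01mem, key01⟩, by decide⟩
    have := hsemi 1 h1v (by rw [← hu]; decide)
    rw [← hv] at this
    exact absurd this (by decide)
  · -- u = 3, v = 2; vertex 4 is a second neighbor of 3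
    have h4v : (4 : Fin 6) ∈ edgeVerts {e | e ∈ (pathGraph 6).edgeSet ∧ c e = a} :=
      ⟨s((4 : Fin 6), 5), ⟨e45mem, key45⟩, by decide⟩
    have := hsemi 4 h4v (by rw [← hu]; decide)
    rw [← hv] at this
    exact absurd this (by decide)

/-- For the path `P₆` on `6` vertices, the 1-degenerate chromatic index equals
`2` while the semistrong chromatic index equals `3`; in particular
`χ'_1(P₆) < χ''_ss(P₆)`. -/
theorem pathGraph_six_chromIdx :
    oneDegChromIdx (SimpleGraph.pathGraph 6) = 2 ∧
    ssChromIdx (SimpleGraph.pathGraph 6) = 3 ∧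
    oneDegChromIdx (SimpleGraph.pathGraph 6) < ssChromIdx (SimpleGraph.pathGraph 6) := by
  have h1 : oneDegChromIdx (SimpleGraph.pathGraph 6) = 2 := by
    refine le_antisymm (Nat.sInf_le hasOneDeg2) (le_csInf ⟨2, hasOneDeg2⟩ ?_)
    intro k hk
    by_contra hlt
    push_neg at hlt
    interval_cases k
    · exact notOneDeg0 hk
    · exact notOneDeg1 hk
  have h2 : ssChromIdx (SimpleGraph.pathGraph 6) = 3 := by
    refine le_antisymm (Nat.sInf_le hasSS3) (le_csInf ⟨3, hasSS3⟩ ?_)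
    intro k hk
    by_contra hlt
    push_neg at hlt
    interval_cases k
    · exact notSS0 hk
    · exact notSS1 hk
    · exact notSS2 hk
  exact ⟨h1, h2, by omega⟩
end
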